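/- arXiv:2312.13175 — 3 statements merged into one kernel-verified Lean document; each statement's English description precedes it below -/
import Mathlib

section
/- (Proposition 1, forward direction, explicit bound) Let Assumption 1 (i-IOSS Lyapunov function U) and Assumption 3 (uniform persistent excitation with index T ∈ ℕ) hold, and assume η̃ := max{η_x,η_p} > 0. Define c₁' := (1/(1−η_x)+1)·λ_max(S_x,S_p), P̃₁ := U_hi + c₁'P_p, Q̃ := Q_x + c₁'Q_p, R̃ := R_x + c₁'R_p, c₂ := min{λ_min(U_lo), λ_min(S_x)}, and c₃ := max{λ_max(P̃₁), λ_max(S_x)·η̃^{1−T}·(1/(1−η_x)+1)}. Then for every K ∈ ℕ, every pair of length-K trajectories {(x_s,u_s,w_s,p)}, {(x̃_s,u_s,w̃_s,p̃)} in ℤ satisfying the system dynamics with common inputs and with outputs y_s, ỹ_s, and for all t ∈ [0,K]: c₂(‖x_t−x̃_t‖² + ‖p−p̃‖²) ≤ c₃ η̃^t (‖x_0−x̃_0‖² + ‖p−p̃‖²) + Σ_{j=1}^{t} η̃^{j−1}(‖w_{t−j}−w̃_{t−j}‖²_{Q̃} + ‖y_{t−j}−ỹ_{t−j}‖²_{R̃});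 that is, the augmented system with state (x,p) is exponentially i-IOSS. -/
open Matrix Finset



/-- Weighted squared norm `‖v‖_Q² = vᵀ Q v`. -/
noncomputable def quad {ι : Type*} [Fintype ι] (Q : Matrix ι ι ℝ) (v : ι → ℝ) : ℝ :=
  v ⬝ᵥ Q.mulVec v

section AuxQuad
open Matrix Finset

lemma dot_self_nonneg' {ι : Type*} [Fintype ι] (v : ι → ℝ) : 0 ≤ v ⬝ᵥ v :=
  Finset.sum_nonneg fun _ _ => mul_self_nonneg _

lemma quad_nonneg' {ι : Type*} [Fintype ι] {M : Matrix ι ι ℝ} (hM : M.PosSemidef)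
    (v : ι → ℝ) : 0 ≤ quad M v := by
  have := hM.re_dotProduct_nonneg v
  simpa [quad] using this

lemma quad_add' {ι : Type*} [Fintype ι] (A B : Matrix ι ι ℝ) (v : ι → ℝ) :
    quad (A + B) v = quad A v + quad B v := by
  simp [quad, Matrix.add_mulVec, dotProduct_add]

lemma quad_smul' {ι : Type*} [Fintype ι] (c : ℝ) (A : Matrix ι ι ℝ) (v : ι → ℝ) :
    quad (c • A) v = c * quad A v := by
  simp [quad, Matrix.smul_mulVec, dotProduct_smul]

lemma quad_le_of_psd_sub' {ι : Type*} [Fintype ι] {A B : Matrix ι ι ℝ}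
    (hAB : (B - A).PosSemidef) (v : ι → ℝ) : quad A v ≤ quad B v := by
  have hq := quad_nonneg' hAB v
  simp only [quad, Matrix.sub_mulVec, dotProduct_sub] at hq
  simp only [quad]
  linarith

lemma geom_aux' (x : ℝ) (t : ℕ) (h0 : 0 ≤ x) (h1 : x < 1) :
    ∑ i ∈ Finset.range t, x ^ i ≤ 1 / (1 - x) := by
  have h2 : 0 < 1 - x := by linarith
  have hg := geom_sum_mul x t
  have hxt : 0 ≤ x ^ t := pow_nonneg h0 t
  rw [le_div_iff₀ h2]
  nlinarith

end AuxQuad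


/-- Membership in the constraint set `ℤ = {(x,u,w,p) ∈ 𝕏×𝕌×𝕎×ℙ : f(x,u,w,p) ∈ 𝕏}`. -/
def ZmemS {n m q o : ℕ}
    (f : (Fin n → ℝ) → (Fin m → ℝ) → (Fin q → ℝ) → (Fin o → ℝ) → (Fin n → ℝ))
    (Xs : Set (Fin n → ℝ)) (Us : Set (Fin m → ℝ)) (Ws : Set (Fin q → ℝ))
    (Ps : Set (Fin o → ℝ))
    (xx : Fin n → ℝ) (uu : Fin m → ℝ) (ww : Fin q → ℝ) (pp : Fin o → ℝ) : Prop :=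
  xx ∈ Xs ∧ uu ∈ Us ∧ ww ∈ Ws ∧ pp ∈ Ps ∧ f xx uu ww pp ∈ Xs

set_option maxHeartbeats 2000000 in
/-- **Proposition 1, forward direction (explicit bound).**
Under Assumption 1 (i-IOSS Lyapunov function `U`) and Assumption 3 (uniform persistent
excitation with index `T`), with `η̃ := max{η_x,η_p} > 0`,
`c₁' := (1/(1−η_x)+1)λ_max(S_x,S_p)`, `P̃₁ := U_hi + c₁'P_p`, `Q̃ := Q_x + c₁'Q_p`,
`R̃ := R_x + c₁'R_p`, `c₂ := min{λ_min(U_lo),λ_min(S_x)}`,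
`c₃ := max{λ_max(P̃₁), λ_max(S_x)η̃^{1−T}(1/(1−η_x)+1)}`, every pair of length-`K`
trajectories with common inputs satisfies, for all `t ≤ K`,
`c₂(‖x_t−x̃_t‖² + ‖p−p̃‖²) ≤ c₃η̃^t(‖x_0−x̃_0‖² + ‖p−p̃‖²)
 + Σ_{j=1}^{t} η̃^{j−1}(‖w_{t−j}−w̃_{t−j}‖²_{Q̃} + ‖y_{t−j}−ỹ_{t−j}‖²_{R̃})`;
i.e. the augmented system with state `(x,p)` is exponentially i-IOSS. -/
theorem detectability_and_uniform_PE_implies_joint_iIOSS_bound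
    {n m q o r : ℕ}
    (f : (Fin n → ℝ) → (Fin m → ℝ) → (Fin q → ℝ) → (Fin o → ℝ) → (Fin n → ℝ))
    (h : (Fin n → ℝ) → (Fin m → ℝ) → (Fin q → ℝ) → (Fin o → ℝ) → (Fin r → ℝ))
    (Xs : Set (Fin n → ℝ)) (Us : Set (Fin m → ℝ)) (Ws : Set (Fin q → ℝ))
    (Ps : Set (Fin o → ℝ))
    -- Assumption 1 data
    (Ulo Uhi : Matrix (Fin n) (Fin n) ℝ) (Sx : Matrix (Fin o) (Fin o) ℝ)
    (Qx : Matrix (Fin q) (Fin q) ℝ) (Rx : Matrix (Fin r) (Fin r) ℝ)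
    (hUlo : Ulo.PosDef) (hUhi : Uhi.PosDef) (hSxM : Sx.PosDef)
    (hQx : Qx.PosDef) (hRx : Rx.PosDef)
    (ηx : ℝ) (hηx0 : 0 ≤ ηx) (hηx1 : ηx < 1)
    (U : (Fin n → ℝ) → (Fin n → ℝ) → ℝ)
    (hUnn : ∀ a b, a ∈ Xs → b ∈ Xs → 0 ≤ U a b)
    (hUbnd : ∀ a b, a ∈ Xs → b ∈ Xs →
      quad Ulo (a - b) ≤ U a b ∧ U a b ≤ quad Uhi (a - b))
    (hUdiss : ∀ xx uu ww pp xxt wwt ppt,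
      ZmemS f Xs Us Ws Ps xx uu ww pp → ZmemS f Xs Us Ws Ps xxt uu wwt ppt →
      U (f xx uu ww pp) (f xxt uu wwt ppt)
        ≤ ηx * U xx xxt + quad Sx (pp - ppt) + quad Qx (ww - wwt)
          + quad Rx (h xx uu ww pp - h xxt uu wwt ppt))
    -- Definition 1 data
    (Sp : Matrix (Fin o) (Fin o) ℝ) (Pp : Matrix (Fin n) (Fin n) ℝ)
    (Qp : Matrix (Fin q) (Fin q) ℝ) (Rp : Matrix (Fin r) (Fin r) ℝ)
    (hSp : Sp.PosDef) (hPp : Pp.PosDef) (hQp : Qp.PosDef) (hRp : Rp.PosDef)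
    (ηp : ℝ) (hηp0 : 0 ≤ ηp) (hηp1 : ηp < 1)
    -- Assumption 3: uniform persistent excitation with index T
    (T : ℕ)
    (hPE : ∀ K : ℕ, T ≤ K →
      ∀ (x xt : ℕ → Fin n → ℝ) (u : ℕ → Fin m → ℝ) (w wt : ℕ → Fin q → ℝ)
        (p pt : Fin o → ℝ) (y yt : ℕ → Fin r → ℝ),
      (∀ s < K, ZmemS f Xs Us Ws Ps (x s) (u s) (w s) p) →
      (∀ s < K, ZmemS f Xs Us Ws Ps (xt s) (u s) (wt s) pt) →
      (∀ s < K, x (s + 1) = f (x s) (u s) (w s) p) →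
      (∀ s < K, xt (s + 1) = f (xt s) (u s) (wt s) pt) →
      (∀ s < K, y s = h (x s) (u s) (w s) p) →
      (∀ s < K, yt s = h (xt s) (u s) (wt s) pt) →
      quad Sp (p - pt)
        ≤ ηp ^ K * quad Pp (x 0 - xt 0)
          + ∑ j ∈ Finset.range K, ηp ^ (K - 1 - j) *
              (quad Qp (w j - wt j) + quad Rp (y j - yt j)))
    -- eigenvalue constants
    (lamSxSp : ℝ)
    (hlamSxSp : IsLeast {l : ℝ | 0 ≤ l ∧ ((l • Sp - Sx :
        Matrix (Fin o) (Fin o) ℝ)).PosSemidef} lamSxSp)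
    (lminUlo : ℝ)
    (hlminUlo : IsGreatest {l : ℝ | ∀ v : Fin n → ℝ, l * (v ⬝ᵥ v) ≤ quad Ulo v} lminUlo)
    (lminSx : ℝ)
    (hlminSx : IsGreatest {l : ℝ | ∀ v : Fin o → ℝ, l * (v ⬝ᵥ v) ≤ quad Sx v} lminSx)
    (lmaxPt1 : ℝ)
    (hlmaxPt1 : IsLeast {l : ℝ | ∀ v : Fin n → ℝ,
      quad (Uhi + ((1 / (1 - ηx) + 1) * lamSxSp) • Pp) v ≤ l * (v ⬝ᵥ v)} lmaxPt1)
    (lmaxSx : ℝ)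
    (hlmaxSx : IsLeast {l : ℝ | ∀ v : Fin o → ℝ, quad Sx v ≤ l * (v ⬝ᵥ v)} lmaxSx)
    -- η̃ > 0
    (hηtpos : 0 < max ηx ηp) :
    ∀ K : ℕ,
    ∀ (x xt : ℕ → Fin n → ℝ) (u : ℕ → Fin m → ℝ) (w wt : ℕ → Fin q → ℝ)
      (p pt : Fin o → ℝ) (y yt : ℕ → Fin r → ℝ),
    x 0 ∈ Xs → xt 0 ∈ Xs →
    (∀ s < K, ZmemS f Xs Us Ws Ps (x s) (u s) (w s) p) →
    (∀ s < K, ZmemS f Xs Us Ws Ps (xt s) (u s) (wt s) pt) →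
    (∀ s < K, x (s + 1) = f (x s) (u s) (w s) p) →
    (∀ s < K, xt (s + 1) = f (xt s) (u s) (wt s) pt) →
    (∀ s < K, y s = h (x s) (u s) (w s) p) →
    (∀ s < K, yt s = h (xt s) (u s) (wt s) pt) →
    ∀ t : ℕ, t ≤ K →
    min lminUlo lminSx *
        ((x t - xt t) ⬝ᵥ (x t - xt t) + (p - pt) ⬝ᵥ (p - pt))
      ≤ max lmaxPt1 (lmaxSx * (max ηx ηp) ^ ((1 : ℤ) - T) * (1 / (1 - ηx) + 1)) *
          (max ηx ηp) ^ t *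
          ((x 0 - xt 0) ⬝ᵥ (x 0 - xt 0) + (p - pt) ⬝ᵥ (p - pt))
        + ∑ j ∈ Finset.range t, (max ηx ηp) ^ j *
            (quad (Qx + ((1 / (1 - ηx) + 1) * lamSxSp) • Qp)
                (w (t - 1 - j) - wt (t - 1 - j))
              + quad (Rx + ((1 / (1 - ηx) + 1) * lamSxSp) • Rp)
                (y (t - 1 - j) - yt (t - 1 - j))) := by
  intro K x xt u w wt p pt y yt hx0X hxt0X hZ hZt hdyn hdynt hy hyt t htK
  -- dispose of the degenerate case o = 0
  rcases Nat.eq_zero_or_pos o with ho | ho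
  · exfalso
    have hmem : (lmaxSx - 1) ∈ {l : ℝ | ∀ v : Fin o → ℝ, quad Sx v ≤ l * (v ⬝ᵥ v)} := by
      intro v
      have hv : v = 0 := by
        subst ho; exact funext fun i => i.elim0
      subst hv
      simp [quad]
    have := hlmaxSx.2 hmem
    linarith
  -- abbreviations
  set η : ℝ := max ηx ηp with hηdef
  set c : ℝ := 1 / (1 - ηx) + 1 with hcdef
  set c1 : ℝ := c * lamSxSp with hc1def
  have h1x : 0 < 1 - ηx := by linarith
  have hcpos : 0 < c := by
    have : 0 < 1 / (1 - ηx) := by positivity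
    rw [hcdef]; linarith
  have hlam : 0 ≤ lamSxSp := hlamSxSp.1.1
  have hc1nn : 0 ≤ c1 := mul_nonneg hcpos.le hlam
  have hη1 : η < 1 := max_lt hηx1 hηp1
  have hηxη : ηx ≤ η := le_max_left _ _
  have hηpη : ηp ≤ η := le_max_right _ _
  have hηnn : 0 ≤ η := le_of_lt hηtpos
  -- lmaxSx is nonnegative (needs o > 0)
  have hlmaxSxnn : 0 ≤ lmaxSx := by
    set v : Fin o → ℝ := Pi.single ⟨0, ho⟩ 1 with hv
    have h1 : v ⬝ᵥ v = 1 := by simp [hv, dotProduct, Pi.single_apply]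
    have h2 := hlmaxSx.1 v
    have h3 := quad_nonneg' hSxM.posSemidef v
    rw [h1] at h2; linarith
  -- states stay in Xs
  have hxX : ∀ s, s ≤ K → x s ∈ Xs := by
    intro s hs
    cases s with
    | zero => exact hx0X
    | succ s' =>
      have hs' : s' < K := hs
      rw [hdyn s' hs']
      exact (hZ s' hs').2.2.2.2
  have hxtX : ∀ s, s ≤ K → xt s ∈ Xs := by
    intro s hs
    cases s with
    | zero => exact hxt0X
    | succ s' =>
      have hs' : s' < K := hs
      rw [hdynt s' hs']
      exact (hZt s' hs').2.2.2.2
  -- the Lyapunov recursion, iterated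
  have key : ∀ s, s ≤ K → U (x s) (xt s)
      ≤ ηx ^ s * U (x 0) (xt 0)
        + ∑ j ∈ Finset.range s, ηx ^ (s - 1 - j) *
            (quad Sx (p - pt) + quad Qx (w j - wt j) + quad Rx (y j - yt j)) := by
    intro s
    induction s with
    | zero => intro _; simp
    | succ s ih =>
      intro hsK
      have hs' : s < K := hsK
      have ihs := ih (le_of_lt hs')
      have step := hUdiss (x s) (u s) (w s) p (xt s) (wt s) pt (hZ s hs') (hZt s hs')
      rw [← hdyn s hs', ← hdynt s hs', ← hy s hs', ← hyt s hs'] at step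
      have hmul := mul_le_mul_of_nonneg_left ihs hηx0
      have hrearr : ηx * (ηx ^ s * U (x 0) (xt 0)
            + ∑ j ∈ Finset.range s, ηx ^ (s - 1 - j) *
                (quad Sx (p - pt) + quad Qx (w j - wt j) + quad Rx (y j - yt j)))
            + (quad Sx (p - pt) + quad Qx (w s - wt s) + quad Rx (y s - yt s))
          = ηx ^ (s + 1) * U (x 0) (xt 0)
            + ∑ j ∈ Finset.range (s + 1), ηx ^ (s + 1 - 1 - j) *
                (quad Sx (p - pt) + quad Qx (w j - wt j) + quad Rx (y j - yt j)) := by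
        rw [Finset.sum_range_succ]
        have h1 : ∀ j ∈ Finset.range s, ηx ^ (s + 1 - 1 - j) *
              (quad Sx (p - pt) + quad Qx (w j - wt j) + quad Rx (y j - yt j))
            = ηx * (ηx ^ (s - 1 - j) *
              (quad Sx (p - pt) + quad Qx (w j - wt j) + quad Rx (y j - yt j))) := by
          intro j hj
          have hj' := Finset.mem_range.mp hj
          have he : s + 1 - 1 - j = (s - 1 - j) + 1 := by omega
          rw [he, pow_succ]; ring
        rw [Finset.sum_congr rfl h1, ← Finset.mul_sum]
        have h0 : s + 1 - 1 - s = 0 := by omega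
        rw [h0, pow_zero, pow_succ]; ring
      linarith
  -- bound B1
  have hA : 0 ≤ quad Sx (p - pt) := quad_nonneg' hSxM.posSemidef _
  have hgeo : ∑ j ∈ Finset.range t, ηx ^ (t - 1 - j) ≤ 1 / (1 - ηx) := by
    have hr := Finset.sum_range_reflect (fun i => ηx ^ i) t
    rw [hr]
    exact geom_aux' ηx t hηx0 hηx1
  have B1 : U (x t) (xt t) + quad Sx (p - pt)
      ≤ ηx ^ t * U (x 0) (xt 0) + c * quad Sx (p - pt)
        + ∑ j ∈ Finset.range t, ηx ^ (t - 1 - j) *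
            (quad Qx (w j - wt j) + quad Rx (y j - yt j)) := by
    have hk := key t htK
    have hsplit : ∀ j ∈ Finset.range t, ηx ^ (t - 1 - j) *
          (quad Sx (p - pt) + quad Qx (w j - wt j) + quad Rx (y j - yt j))
        = ηx ^ (t - 1 - j) * quad Sx (p - pt)
          + ηx ^ (t - 1 - j) * (quad Qx (w j - wt j) + quad Rx (y j - yt j)) := by
      intro j _; ring
    rw [Finset.sum_congr rfl hsplit, Finset.sum_add_distrib, ← Finset.sum_mul] at hk
    have hmul := mul_le_mul_of_nonneg_right hgeo hA
    have hcA : c * quad Sx (p - pt)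
        = (1 / (1 - ηx)) * quad Sx (p - pt) + quad Sx (p - pt) := by
      rw [hcdef]; ring
    rw [hcA]
    linarith [hk, hmul, hA]
  -- LHS lower bound
  have hU0nn : 0 ≤ U (x 0) (xt 0) := hUnn _ _ hx0X hxt0X
  have a0nn : 0 ≤ (x 0 - xt 0) ⬝ᵥ (x 0 - xt 0) := dot_self_nonneg' _
  have apnn : 0 ≤ (p - pt) ⬝ᵥ (p - pt) := dot_self_nonneg' _
  have hLHS : min lminUlo lminSx *
        ((x t - xt t) ⬝ᵥ (x t - xt t) + (p - pt) ⬝ᵥ (p - pt))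
      ≤ U (x t) (xt t) + quad Sx (p - pt) := by
    have h1 := hlminUlo.1 (x t - xt t)
    have h2 := hlminSx.1 (p - pt)
    have h3 := (hUbnd (x t) (xt t) (hxX t htK) (hxtX t htK)).1
    have d1 : 0 ≤ (x t - xt t) ⬝ᵥ (x t - xt t) := dot_self_nonneg' _
    have m1 : min lminUlo lminSx * ((x t - xt t) ⬝ᵥ (x t - xt t))
        ≤ lminUlo * ((x t - xt t) ⬝ᵥ (x t - xt t)) :=
      mul_le_mul_of_nonneg_right (min_le_left _ _) d1
    have m2 : min lminUlo lminSx * ((p - pt) ⬝ᵥ (p - pt))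
        ≤ lminSx * ((p - pt) ⬝ᵥ (p - pt)) :=
      mul_le_mul_of_nonneg_right (min_le_right _ _) apnn
    nlinarith [m1, m2, h1, h2, h3]
  -- reindexing the tail sum
  have hTS : ∑ j ∈ Finset.range t, η ^ j *
        (quad (Qx + c1 • Qp) (w (t - 1 - j) - wt (t - 1 - j))
          + quad (Rx + c1 • Rp) (y (t - 1 - j) - yt (t - 1 - j)))
      = ∑ j ∈ Finset.range t, η ^ (t - 1 - j) *
        (quad (Qx + c1 • Qp) (w j - wt j) + quad (Rx + c1 • Rp) (y j - yt j)) := by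
    rw [← Finset.sum_range_reflect (fun j => η ^ (t - 1 - j) *
        (quad (Qx + c1 • Qp) (w j - wt j) + quad (Rx + c1 • Rp) (y j - yt j))) t]
    apply Finset.sum_congr rfl
    intro j hj
    have hj' := Finset.mem_range.mp hj
    have he : t - 1 - (t - 1 - j) = j := by omega
    simp only [he]
  -- nonnegativity of the pieces
  have hQxnn : ∀ j, 0 ≤ quad Qx (w j - wt j) := fun j => quad_nonneg' hQx.posSemidef _
  have hRxnn : ∀ j, 0 ≤ quad Rx (y j - yt j) := fun j => quad_nonneg' hRx.posSemidef _
  have hQpnn : ∀ j, 0 ≤ quad Qp (w j - wt j) := fun j => quad_nonneg' hQp.posSemidef _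
  have hRpnn : ∀ j, 0 ≤ quad Rp (y j - yt j) := fun j => quad_nonneg' hRp.posSemidef _
  have hPpnn : 0 ≤ quad Pp (x 0 - xt 0) := quad_nonneg' hPp.posSemidef _
  have hUhiQ : U (x 0) (xt 0) ≤ quad Uhi (x 0 - xt 0) := (hUbnd _ _ hx0X hxt0X).2
  have hUhinn : 0 ≤ quad Uhi (x 0 - xt 0) := le_trans hU0nn hUhiQ
  -- quad of the combined matrices
  have hQt : ∀ j, quad (Qx + c1 • Qp) (w j - wt j)
      = quad Qx (w j - wt j) + c1 * quad Qp (w j - wt j) := by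
    intro j; rw [quad_add', quad_smul']
  have hRt : ∀ j, quad (Rx + c1 • Rp) (y j - yt j)
      = quad Rx (y j - yt j) + c1 * quad Rp (y j - yt j) := by
    intro j; rw [quad_add', quad_smul']
  have hPt : quad (Uhi + c1 • Pp) (x 0 - xt 0)
      = quad Uhi (x 0 - xt 0) + c1 * quad Pp (x 0 - xt 0) := by
    rw [quad_add', quad_smul']
  have hlamPt := hlmaxPt1.1 (x 0 - xt 0)
  -- powers comparisons
  have hpowx : ∀ e : ℕ, ηx ^ e ≤ η ^ e := fun e => pow_le_pow_left₀ hηx0 hηxη e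
  have hpowp : ∀ e : ℕ, ηp ^ e ≤ η ^ e := fun e => pow_le_pow_left₀ hηp0 hηpη e
  have hηtnn : 0 ≤ η ^ t := pow_nonneg hηnn t
  have hzTnn : 0 ≤ η ^ ((1 : ℤ) - T) := le_of_lt (zpow_pos hηtpos _)
  -- case split on t < T or T ≤ t
  rcases lt_or_ge t T with hT | hT
  · -- small t : no PE needed
    have hzp : (1 : ℝ) ≤ η ^ ((1 : ℤ) - T) * η ^ t := by
      have hz : η ^ ((1 : ℤ) - T) * η ^ t = η ^ ((1 : ℤ) - T + t) := by
        rw [← zpow_natCast η t, ← zpow_add₀ (ne_of_gt hηtpos)]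
      rw [hz]
      exact one_le_zpow_of_nonpos₀ hηtpos hη1.le (by omega)
    -- bound the constant p-term
    have hp1 : c * quad Sx (p - pt) ≤ c * (lmaxSx * ((p - pt) ⬝ᵥ (p - pt))) :=
      mul_le_mul_of_nonneg_left (hlmaxSx.1 (p - pt)) hcpos.le
    have hp2 : c * (lmaxSx * ((p - pt) ⬝ᵥ (p - pt)))
        ≤ lmaxSx * η ^ ((1 : ℤ) - T) * c * η ^ t * ((p - pt) ⬝ᵥ (p - pt)) := by
      have base : 0 ≤ c * lmaxSx * ((p - pt) ⬝ᵥ (p - pt)) :=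
        mul_nonneg (mul_nonneg hcpos.le hlmaxSxnn) apnn
      nlinarith [hzp, base]
    -- tail sum bound
    have htail : ∑ j ∈ Finset.range t, ηx ^ (t - 1 - j) *
          (quad Qx (w j - wt j) + quad Rx (y j - yt j))
        ≤ ∑ j ∈ Finset.range t, η ^ (t - 1 - j) *
          (quad (Qx + c1 • Qp) (w j - wt j) + quad (Rx + c1 • Rp) (y j - yt j)) := by
      apply Finset.sum_le_sum
      intro j _
      have e1 := hpowx (t - 1 - j)
      have e2 : 0 ≤ η ^ (t - 1 - j) := pow_nonneg hηnn _
      have e3 : 0 ≤ ηx ^ (t - 1 - j) := pow_nonneg hηx0 _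
      rw [hQt j, hRt j]
      nlinarith [hQxnn j, hRxnn j, hQpnn j, hRpnn j, mul_nonneg hc1nn (hQpnn j),
        mul_nonneg hc1nn (hRpnn j)]
    -- initial-state term bound
    have hx1 : ηx ^ t * U (x 0) (xt 0) ≤ η ^ t * quad Uhi (x 0 - xt 0) := by
      nlinarith [hpowx t, hU0nn, hUhiQ, pow_nonneg hηx0 t]
    have hx2 : η ^ t * quad Uhi (x 0 - xt 0)
        ≤ lmaxPt1 * η ^ t * ((x 0 - xt 0) ⬝ᵥ (x 0 - xt 0)) := by
      have : quad Uhi (x 0 - xt 0) ≤ lmaxPt1 * ((x 0 - xt 0) ⬝ᵥ (x 0 - xt 0)) := by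
        rw [hPt] at hlamPt
        nlinarith [mul_nonneg hc1nn hPpnn]
      nlinarith [hηtnn]
    -- combine with c3
    have hc3a : lmaxPt1 ≤ max lmaxPt1 (lmaxSx * η ^ ((1 : ℤ) - T) * c) := le_max_left _ _
    have hc3b : lmaxSx * η ^ ((1 : ℤ) - T) * c
        ≤ max lmaxPt1 (lmaxSx * η ^ ((1 : ℤ) - T) * c) := le_max_right _ _
    have hfin1 : lmaxPt1 * η ^ t * ((x 0 - xt 0) ⬝ᵥ (x 0 - xt 0))
        ≤ max lmaxPt1 (lmaxSx * η ^ ((1 : ℤ) - T) * c) * η ^ t *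
            ((x 0 - xt 0) ⬝ᵥ (x 0 - xt 0)) :=
      mul_le_mul_of_nonneg_right (mul_le_mul_of_nonneg_right hc3a hηtnn) a0nn
    have hfin2 : lmaxSx * η ^ ((1 : ℤ) - T) * c * η ^ t * ((p - pt) ⬝ᵥ (p - pt))
        ≤ max lmaxPt1 (lmaxSx * η ^ ((1 : ℤ) - T) * c) * η ^ t *
            ((p - pt) ⬝ᵥ (p - pt)) :=
      mul_le_mul_of_nonneg_right (mul_le_mul_of_nonneg_right hc3b hηtnn) apnn
    have hgoalrhs : max lmaxPt1 (lmaxSx * η ^ ((1 : ℤ) - T) * c) * η ^ t *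
          ((x 0 - xt 0) ⬝ᵥ (x 0 - xt 0))
        + max lmaxPt1 (lmaxSx * η ^ ((1 : ℤ) - T) * c) * η ^ t *
          ((p - pt) ⬝ᵥ (p - pt))
        = max lmaxPt1 (lmaxSx * η ^ ((1 : ℤ) - T) * c) * η ^ t *
          ((x 0 - xt 0) ⬝ᵥ (x 0 - xt 0) + (p - pt) ⬝ᵥ (p - pt)) := by ring
    linarith [hLHS, B1, hp1, hp2, htail, hx1, hx2, hfin1, hfin2, hTS]
  · -- large t : use persistent excitation
    have hPEt := hPE t hT x xt u w wt p pt y yt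
      (fun s hs => hZ s (lt_of_lt_of_le hs htK))
      (fun s hs => hZt s (lt_of_lt_of_le hs htK))
      (fun s hs => hdyn s (lt_of_lt_of_le hs htK))
      (fun s hs => hdynt s (lt_of_lt_of_le hs htK))
      (fun s hs => hy s (lt_of_lt_of_le hs htK))
      (fun s hs => hyt s (lt_of_lt_of_le hs htK))
    -- quad Sx ≤ lamSxSp * quad Sp
    have hSxSp : quad Sx (p - pt) ≤ lamSxSp * quad Sp (p - pt) := by
      have := quad_le_of_psd_sub' hlamSxSp.1.2 (p - pt)
      rwa [quad_smul'] at this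
    have hcS : c * quad Sx (p - pt)
        ≤ c1 * (ηp ^ t * quad Pp (x 0 - xt 0)
          + ∑ j ∈ Finset.range t, ηp ^ (t - 1 - j) *
              (quad Qp (w j - wt j) + quad Rp (y j - yt j))) := by
      have s1 : c * quad Sx (p - pt) ≤ c1 * quad Sp (p - pt) := by
        rw [hc1def, mul_assoc]
        exact mul_le_mul_of_nonneg_left hSxSp hcpos.le
      have s2 : c1 * quad Sp (p - pt) ≤ c1 * (ηp ^ t * quad Pp (x 0 - xt 0)
          + ∑ j ∈ Finset.range t, ηp ^ (t - 1 - j) *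
              (quad Qp (w j - wt j) + quad Rp (y j - yt j))) :=
        mul_le_mul_of_nonneg_left hPEt hc1nn
      linarith
    -- combine sums
    have hcomb : ∑ j ∈ Finset.range t, ηx ^ (t - 1 - j) *
          (quad Qx (w j - wt j) + quad Rx (y j - yt j))
        + c1 * ∑ j ∈ Finset.range t, ηp ^ (t - 1 - j) *
          (quad Qp (w j - wt j) + quad Rp (y j - yt j))
        ≤ ∑ j ∈ Finset.range t, η ^ (t - 1 - j) *
          (quad (Qx + c1 • Qp) (w j - wt j) + quad (Rx + c1 • Rp) (y j - yt j)) := by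
      rw [Finset.mul_sum, ← Finset.sum_add_distrib]
      apply Finset.sum_le_sum
      intro j _
      have e1 := hpowx (t - 1 - j)
      have e2 := hpowp (t - 1 - j)
      have e3 : 0 ≤ η ^ (t - 1 - j) := pow_nonneg hηnn _
      have e4 : 0 ≤ ηx ^ (t - 1 - j) := pow_nonneg hηx0 _
      have e5 : 0 ≤ ηp ^ (t - 1 - j) := pow_nonneg hηp0 _
      rw [hQt j, hRt j]
      nlinarith [hQxnn j, hRxnn j, hQpnn j, hRpnn j, hc1nn,
        mul_nonneg hc1nn (hQpnn j), mul_nonneg hc1nn (hRpnn j),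
        mul_nonneg hc1nn (add_nonneg (hQpnn j) (hRpnn j))]
    -- initial state term
    have hx1 : ηx ^ t * U (x 0) (xt 0) + c1 * (ηp ^ t * quad Pp (x 0 - xt 0))
        ≤ η ^ t * quad (Uhi + c1 • Pp) (x 0 - xt 0) := by
      rw [hPt]
      have e1 := hpowx t
      have e2 := hpowp t
      have e3 : 0 ≤ ηx ^ t := pow_nonneg hηx0 t
      have e4 : 0 ≤ ηp ^ t := pow_nonneg hηp0 t
      nlinarith [hU0nn, hUhiQ, hPpnn, mul_nonneg hc1nn hPpnn, hηtnn]
    have hx2 : η ^ t * quad (Uhi + c1 • Pp) (x 0 - xt 0)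
        ≤ lmaxPt1 * η ^ t * ((x 0 - xt 0) ⬝ᵥ (x 0 - xt 0)) := by
      nlinarith [hlamPt, hηtnn]
    -- c3 ≥ 0 and c3 ≥ lmaxPt1
    have hc3nn : 0 ≤ max lmaxPt1 (lmaxSx * η ^ ((1 : ℤ) - T) * c) :=
      le_trans (mul_nonneg (mul_nonneg hlmaxSxnn hzTnn) hcpos.le) (le_max_right _ _)
    have hc3a : lmaxPt1 ≤ max lmaxPt1 (lmaxSx * η ^ ((1 : ℤ) - T) * c) := le_max_left _ _
    have hfin1 : lmaxPt1 * η ^ t * ((x 0 - xt 0) ⬝ᵥ (x 0 - xt 0))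
        ≤ max lmaxPt1 (lmaxSx * η ^ ((1 : ℤ) - T) * c) * η ^ t *
            ((x 0 - xt 0) ⬝ᵥ (x 0 - xt 0) + (p - pt) ⬝ᵥ (p - pt)) := by
      have s1 : lmaxPt1 * η ^ t * ((x 0 - xt 0) ⬝ᵥ (x 0 - xt 0))
          ≤ max lmaxPt1 (lmaxSx * η ^ ((1 : ℤ) - T) * c) * η ^ t *
              ((x 0 - xt 0) ⬝ᵥ (x 0 - xt 0)) :=
        mul_le_mul_of_nonneg_right (mul_le_mul_of_nonneg_right hc3a hηtnn) a0nn
      have s2 : max lmaxPt1 (lmaxSx * η ^ ((1 : ℤ) - T) * c) * η ^ t *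
            ((x 0 - xt 0) ⬝ᵥ (x 0 - xt 0) + (p - pt) ⬝ᵥ (p - pt))
          = max lmaxPt1 (lmaxSx * η ^ ((1 : ℤ) - T) * c) * η ^ t *
              ((x 0 - xt 0) ⬝ᵥ (x 0 - xt 0))
            + max lmaxPt1 (lmaxSx * η ^ ((1 : ℤ) - T) * c) * η ^ t *
              ((p - pt) ⬝ᵥ (p - pt)) := by ring
      have s3 : 0 ≤ max lmaxPt1 (lmaxSx * η ^ ((1 : ℤ) - T) * c) * η ^ t *
            ((p - pt) ⬝ᵥ (p - pt)) :=
        mul_nonneg (mul_nonneg hc3nn hηtnn) apnn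
      linarith
    -- assemble
    have hdist : c1 * (ηp ^ t * quad Pp (x 0 - xt 0)
          + ∑ j ∈ Finset.range t, ηp ^ (t - 1 - j) *
              (quad Qp (w j - wt j) + quad Rp (y j - yt j)))
        = c1 * (ηp ^ t * quad Pp (x 0 - xt 0))
          + c1 * ∑ j ∈ Finset.range t, ηp ^ (t - 1 - j) *
              (quad Qp (w j - wt j) + quad Rp (y j - yt j)) := by ring
    linarith [hLHS, B1, hcS, hcomb, hx1, hx2, hfin1, hTS, hdist]
end

section
/- (Proposition 2) Let f and h be twice continuously differentiable and, for z = (x,u,w,p), z̃ = (x̃,u,w̃,p̃) ∈ ℤ, define the mean-value linearizations A(z,z̃) := ∫₀¹ ∂f/∂x(z+s(z̃−z))ds, B(z,z̃) := ∫₀¹ ∂f/∂w(·)ds, E(z,z̃) := ∫₀¹ ∂f/∂p(·)ds, C(z,z̃) := ∫₀¹ ∂h/∂x(·)ds, D(z,z̃) := ∫₀¹ ∂h/∂w(·)ds, F(z,z̃) := ∫₀¹ ∂h/∂p(·)ds. Suppose Assumption 4 holds (‖B(z,z̃)‖ ≤ B̄, ‖C(z,z̃)‖ ≤ C̄, ‖D(z,z̃)‖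 ≤ D̄ for all z,z̃ ∈ ℤ) and Assumption 5 holds (there exist L : ℤ×ℤ → ℝ^{n×r} with ‖L(z,z̃)‖ ≤ L̄, a symmetric positive definite P, and η ∈ (0,1) such that Φ(z,z̃) := A(z,z̃)+L(z,z̃)C(z,z̃) satisfies Φ(z,z̃)ᵀPΦ(z,z̃) ⪯ ηP for all z,z̃ ∈ ℤ). Fix T ≥ 1, ε > 0 and γ > 0 such that μ := (1+ε)η + 3γC̄²/λ_min(P) < 1, and let a pair of length-T system trajectories in ℤ (with entries z_t, z̃_t, common inputs, outputs y_t, ỹ_t) satisfy 𝒞_T := Σ_{t=0}^{T−1} μ^{T−1−t} Ȳ_tᵀ Ȳ_t ⪰ α I_o for some α > 0, where Ȳ_t := C(z_t,z̃_t)Y_t + F(z_t,z̃_t) and Y_0 := 0, Y_{t+1} := Φ(z_t,z̃_t)Y_t + E(z_t,z̃_t) + L(z_t,z̃_t)F(z_t,z̃_t). Then there exist symmetric positive definite matrices Q_p, S_p, R_p and η_p ∈ [0,1) (one may take η_p = μ and S_p = αγ I_o) such that the trajectory pair belongs to 𝔼_T with P_p = P, i.e., ‖p−p̃‖²_{S_p}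 ≤ η_p^T‖x_0−x̃_0‖²_P + Σ_{j=0}^{T−1} η_p^{T−j−1}(‖w_j−w̃_j‖²_{Q_p} + ‖y_j−ỹ_j‖²_{R_p}). -/
open Matrix Finset

/-- Euclidean norm of a vector. -/
noncomputable def eucNorm {ι : Type*} [Fintype ι] (v : ι → ℝ) : ℝ :=
  Real.sqrt (v ⬝ᵥ v)

/-- Combined point `z = (x,u,w,p)`. -/
abbrev Pt (n m q o : ℕ) :=
  (Fin n → ℝ) × (Fin m → ℝ) × (Fin q → ℝ) × (Fin o → ℝ)

/-- Membership of `z = (x,u,w,p)` in `ℤ = {(x,u,w,p) ∈ 𝕏×𝕌×𝕎×ℙ : f(x,u,w,p) ∈ 𝕏}`. -/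
def ZmemT {n m q o : ℕ}
    (f : (Fin n → ℝ) → (Fin m → ℝ) → (Fin q → ℝ) → (Fin o → ℝ) → (Fin n → ℝ))
    (Xs : Set (Fin n → ℝ)) (Us : Set (Fin m → ℝ)) (Ws : Set (Fin q → ℝ))
    (Ps : Set (Fin o → ℝ)) (z : Pt n m q o) : Prop :=
  z.1 ∈ Xs ∧ z.2.1 ∈ Us ∧ z.2.2.1 ∈ Ws ∧ z.2.2.2 ∈ Ps
    ∧ f z.1 z.2.1 z.2.2.1 z.2.2.2 ∈ Xs

/-- Mean-value linearization `A(z,z̃) = ∫₀¹ ∂f/∂x (z+s(z̃−z)) ds`. -/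
noncomputable def Amat {n m q o : ℕ}
    (f : (Fin n → ℝ) → (Fin m → ℝ) → (Fin q → ℝ) → (Fin o → ℝ) → (Fin n → ℝ))
    (z zt : Pt n m q o) : Matrix (Fin n) (Fin n) ℝ :=
  fun i jj => ∫ s in (0:ℝ)..1,
    fderiv ℝ (fun xv => f xv (z + s • (zt - z)).2.1 (z + s • (zt - z)).2.2.1
      (z + s • (zt - z)).2.2.2 i) ((z + s • (zt - z)).1) (Pi.single jj 1)

/-- Mean-value linearization `B(z,z̃) = ∫₀¹ ∂f/∂w (z+s(z̃−z)) ds`. -/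
noncomputable def Bmat {n m q o : ℕ}
    (f : (Fin n → ℝ) → (Fin m → ℝ) → (Fin q → ℝ) → (Fin o → ℝ) → (Fin n → ℝ))
    (z zt : Pt n m q o) : Matrix (Fin n) (Fin q) ℝ :=
  fun i jj => ∫ s in (0:ℝ)..1,
    fderiv ℝ (fun wv => f (z + s • (zt - z)).1 (z + s • (zt - z)).2.1 wv
      (z + s • (zt - z)).2.2.2 i) ((z + s • (zt - z)).2.2.1) (Pi.single jj 1)

/-- Mean-value linearization `E(z,z̃) = ∫₀¹ ∂f/∂p (z+s(z̃−z)) ds`. -/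
noncomputable def Emat {n m q o : ℕ}
    (f : (Fin n → ℝ) → (Fin m → ℝ) → (Fin q → ℝ) → (Fin o → ℝ) → (Fin n → ℝ))
    (z zt : Pt n m q o) : Matrix (Fin n) (Fin o) ℝ :=
  fun i jj => ∫ s in (0:ℝ)..1,
    fderiv ℝ (fun pv => f (z + s • (zt - z)).1 (z + s • (zt - z)).2.1
      (z + s • (zt - z)).2.2.1 pv i) ((z + s • (zt - z)).2.2.2) (Pi.single jj 1)

/-- Mean-value linearization `C(z,z̃) = ∫₀¹ ∂h/∂x (z+s(z̃−z)) ds`. -/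
noncomputable def Cmat {n m q o r : ℕ}
    (h : (Fin n → ℝ) → (Fin m → ℝ) → (Fin q → ℝ) → (Fin o → ℝ) → (Fin r → ℝ))
    (z zt : Pt n m q o) : Matrix (Fin r) (Fin n) ℝ :=
  fun i jj => ∫ s in (0:ℝ)..1,
    fderiv ℝ (fun xv => h xv (z + s • (zt - z)).2.1 (z + s • (zt - z)).2.2.1
      (z + s • (zt - z)).2.2.2 i) ((z + s • (zt - z)).1) (Pi.single jj 1)

/-- Mean-value linearization `D(z,z̃) = ∫₀¹ ∂h/∂w (z+s(z̃−z)) ds`. -/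
noncomputable def Dmat {n m q o r : ℕ}
    (h : (Fin n → ℝ) → (Fin m → ℝ) → (Fin q → ℝ) → (Fin o → ℝ) → (Fin r → ℝ))
    (z zt : Pt n m q o) : Matrix (Fin r) (Fin q) ℝ :=
  fun i jj => ∫ s in (0:ℝ)..1,
    fderiv ℝ (fun wv => h (z + s • (zt - z)).1 (z + s • (zt - z)).2.1 wv
      (z + s • (zt - z)).2.2.2 i) ((z + s • (zt - z)).2.2.1) (Pi.single jj 1)

/-- Mean-value linearization `F(z,z̃) = ∫₀¹ ∂h/∂p (z+s(z̃−z)) ds`. -/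
noncomputable def Fmat {n m q o r : ℕ}
    (h : (Fin n → ℝ) → (Fin m → ℝ) → (Fin q → ℝ) → (Fin o → ℝ) → (Fin r → ℝ))
    (z zt : Pt n m q o) : Matrix (Fin r) (Fin o) ℝ :=
  fun i jj => ∫ s in (0:ℝ)..1,
    fderiv ℝ (fun pv => h (z + s • (zt - z)).1 (z + s • (zt - z)).2.1
      (z + s • (zt - z)).2.2.1 pv i) ((z + s • (zt - z)).2.2.2) (Pi.single jj 1)


namespace PropAux

open Matrix Finset

section dotfacts
variable {ι : Type*} [Fintype ι]

lemma dot_self_nonneg (v : ι → ℝ) : 0 ≤ v ⬝ᵥ v :=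
  Finset.sum_nonneg fun i _ => mul_self_nonneg _

lemma enorm_sq (v : ι → ℝ) : eucNorm v ^ 2 = v ⬝ᵥ v := Real.sq_sqrt (dot_self_nonneg v)

lemma enorm_nonneg' (v : ι → ℝ) : 0 ≤ eucNorm v := Real.sqrt_nonneg _

lemma sq_single_le_dot (v : ι → ℝ) (i : ι) : v i ^ 2 ≤ v ⬝ᵥ v := by
  have := Finset.single_le_sum (f := fun j => v j * v j)
    (fun j _ => mul_self_nonneg _) (Finset.mem_univ i)
  simpa [dotProduct, sq] using this

lemma abs_mul_abs_le_dot (v : ι → ℝ) (i j : ι) : |v i| * |v j| ≤ v ⬝ᵥ v := by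
  have h1 := sq_single_le_dot v i
  have h2 := sq_single_le_dot v j
  nlinarith [abs_nonneg (v i), abs_nonneg (v j), sq_abs (v i), sq_abs (v j)]

lemma quad_le_sum_abs (M : Matrix ι ι ℝ) (v : ι → ℝ) :
    quad M v ≤ (∑ i, ∑ j, |M i j|) * (v ⬝ᵥ v) := by
  have h : quad M v = ∑ i, ∑ j, v i * (M i j * v j) := by
    simp [quad, dotProduct, Matrix.mulVec, Finset.mul_sum]
  rw [h, Finset.sum_mul]
  refine Finset.sum_le_sum fun i _ => ?_
  rw [Finset.sum_mul]
  refine Finset.sum_le_sum fun j _ => ?_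
  calc v i * (M i j * v j) ≤ |v i * (M i j * v j)| := le_abs_self _
    _ = |M i j| * (|v i| * |v j|) := by rw [abs_mul, abs_mul]; ring
    _ ≤ |M i j| * (v ⬝ᵥ v) :=
        mul_le_mul_of_nonneg_left (abs_mul_abs_le_dot v i j) (abs_nonneg _)

lemma dot_cross (a b : ι → ℝ) : 2 * (a ⬝ᵥ b) ≤ a ⬝ᵥ a + b ⬝ᵥ b := by
  have h := dot_self_nonneg (a - b)
  have hexp : (a - b) ⬝ᵥ (a - b) = a ⬝ᵥ a - 2 * (a ⬝ᵥ b) + b ⬝ᵥ b := by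
    rw [sub_dotProduct, dotProduct_sub, dotProduct_sub, dotProduct_comm b a]
    ring
  linarith [hexp ▸ h]

lemma dot_sub_le_two (a b : ι → ℝ) :
    (a - b) ⬝ᵥ (a - b) ≤ 2 * (a ⬝ᵥ a) + 2 * (b ⬝ᵥ b) := by
  have hexp : (a - b) ⬝ᵥ (a - b) = a ⬝ᵥ a - 2 * (a ⬝ᵥ b) + b ⬝ᵥ b := by
    rw [sub_dotProduct, dotProduct_sub, dotProduct_sub, dotProduct_comm b a]
    ring
  have h := dot_cross a (-b)
  have h2 : a ⬝ᵥ (-b) = -(a ⬝ᵥ b) := by simp [dotProduct_neg]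
  have h3 : (-b) ⬝ᵥ (-b) = b ⬝ᵥ b := by simp [neg_dotProduct, dotProduct_neg]
  rw [h2, h3] at h
  linarith [hexp]

lemma dot_sub_sub_le_three (a b c : ι → ℝ) :
    (a - b - c) ⬝ᵥ (a - b - c) ≤ 3 * (a ⬝ᵥ a) + 3 * (b ⬝ᵥ b) + 3 * (c ⬝ᵥ c) := by
  have hexp : (a - b - c) ⬝ᵥ (a - b - c)
      = a ⬝ᵥ a + b ⬝ᵥ b + c ⬝ᵥ c - 2 * (a ⬝ᵥ b) - 2 * (a ⬝ᵥ c) + 2 * (b ⬝ᵥ c) := by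
    simp only [sub_dotProduct, dotProduct_sub]
    rw [dotProduct_comm b a, dotProduct_comm c a, dotProduct_comm c b]
    ring
  have h1 := dot_cross a (-b)
  have h2 := dot_cross a (-c)
  have h3 := dot_cross b c
  simp only [dotProduct_neg, neg_dotProduct, neg_neg] at h1 h2 h3
  linarith [hexp]

lemma dot_neg_both (v : ι → ℝ) : (-v) ⬝ᵥ (-v) = v ⬝ᵥ v := by
  simp [neg_dotProduct, dotProduct_neg]

lemma dot_sub_comm (a b : ι → ℝ) : (a - b) ⬝ᵥ (a - b) = (b - a) ⬝ᵥ (b - a) := by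
  have : b - a = -(a - b) := by ring
  rw [this, dot_neg_both]

lemma quad_neg {M : Matrix ι ι ℝ} (v : ι → ℝ) : quad M (-v) = quad M v := by
  simp [quad, Matrix.mulVec_neg, dotProduct_neg, neg_dotProduct]

lemma sq_enorm_le {ι' : Type*} [Fintype ι'] {a : ι → ℝ} {c : ℝ} {b : ι' → ℝ}
    (h : eucNorm a ≤ c * eucNorm b) : a ⬝ᵥ a ≤ c ^ 2 * (b ⬝ᵥ b) := by
  have h0 : 0 ≤ eucNorm a := enorm_nonneg' a
  have := pow_le_pow_left₀ h0 h 2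
  rw [enorm_sq] at this
  calc a ⬝ᵥ a ≤ (c * eucNorm b) ^ 2 := this
    _ = c ^ 2 * eucNorm b ^ 2 := by ring
    _ = c ^ 2 * (b ⬝ᵥ b) := by rw [enorm_sq]

end dotfacts

section quadfacts
variable {ι : Type*} [Fintype ι]
open scoped MatrixOrder

lemma posSemidef_dot_nonneg {M : Matrix ι ι ℝ} (hM : M.PosSemidef) (v : ι → ℝ) :
    0 ≤ v ⬝ᵥ M.mulVec v := by
  have := hM.dotProduct_mulVec_nonneg v
  simpa using this

lemma quad_nonneg_of_posSemidef {M : Matrix ι ι ℝ} (hM : M.PosSemidef) (v : ι → ℝ) :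
    0 ≤ quad M v := posSemidef_dot_nonneg hM v

lemma quad_smul_vec (M : Matrix ι ι ℝ) (c : ℝ) (v : ι → ℝ) :
    quad M (c • v) = c ^ 2 * quad M v := by
  simp [quad, Matrix.mulVec_smul, smul_dotProduct, dotProduct_smul, sq]
  ring

lemma quad_add (M : Matrix ι ι ℝ) (hsym : Mᵀ = M) (a b : ι → ℝ) :
    quad M (a + b) = quad M a + 2 * (a ⬝ᵥ M.mulVec b) + quad M b := by
  have hba : b ⬝ᵥ M.mulVec a = a ⬝ᵥ M.mulVec b := by
    rw [dotProduct_mulVec, ← vecMul_transpose, hsym, dotProduct_comm]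
  simp only [quad, Matrix.mulVec_add, add_dotProduct, dotProduct_add]
  ring_nf
  rw [hba]; ring

lemma quad_young {M : Matrix ι ι ℝ} (hM : M.PosSemidef) (s : ℝ) (hs : 0 < s)
    (a b : ι → ℝ) : quad M (a + b) ≤ (1 + s) * quad M a + (1 + s⁻¹) * quad M b := by
  have hsym : Mᵀ = M := by
    have : Mᴴ = M := hM.1
    rwa [conjTranspose_eq_transpose_of_trivial] at this
  have key : 0 ≤ quad M (s • a - b) := quad_nonneg_of_posSemidef hM _
  have hexp : quad M (s • a - b) = s^2 * quad M a - 2 * s * (a ⬝ᵥ M.mulVec b) + quad M b := by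
    have h := quad_add M hsym (s • a) (-b)
    simp only [sub_eq_add_neg] at *
    rw [h, quad_smul_vec]
    have h1 : quad M (-b) = quad M b := quad_neg b
    have h2 : (s • a) ⬝ᵥ M.mulVec (-b) = -(s * (a ⬝ᵥ M.mulVec b)) := by
      simp [smul_dotProduct, Matrix.mulVec_neg, dotProduct_neg,
        Matrix.smul_mulVec]
    rw [h1, h2]; ring
  have hcross : 2 * (a ⬝ᵥ M.mulVec b) ≤ s * quad M a + s⁻¹ * quad M b := by
    rw [hexp] at key
    have h0 := mul_nonneg (inv_nonneg.mpr hs.le) key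
    have h2 : s⁻¹ * (s ^ 2 * quad M a - 2 * s * (a ⬝ᵥ M.mulVec b) + quad M b)
        = s * quad M a - 2 * (a ⬝ᵥ M.mulVec b) + s⁻¹ * quad M b := by
      field_simp
    rw [h2] at h0
    linarith
  have h := quad_add M hsym a b
  nlinarith [hcross]

lemma herm_transpose (M : Matrix ι ι ℝ) (h : M.IsHermitian) : Mᵀ = M := by
  have h2 : Mᴴ = M := h
  rwa [conjTranspose_eq_transpose_of_trivial] at h2

lemma dot_self_pos {v : ι → ℝ} (hv : v ≠ 0) : 0 < v ⬝ᵥ v := by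
  rcases Function.ne_iff.mp hv with ⟨i, hi⟩
  have hi' : v i ≠ 0 := by simpa using hi
  have h1 : 0 < v i ^ 2 := by
    have := mul_self_pos.mpr hi'
    nlinarith [this]
  have h2 := sq_single_le_dot v i
  linarith

lemma posDef_smul_one [DecidableEq ι] {c : ℝ} (hc : 0 < c) :
    ((c • (1 : Matrix ι ι ℝ))).PosDef := by
  refine Matrix.PosDef.of_dotProduct_mulVec_pos ?_ ?_
  · show (c • (1 : Matrix ι ι ℝ))ᴴ = _
    rw [conjTranspose_smul]
    simp
  · intro x hx
    have h1 : (c • (1 : Matrix ι ι ℝ)).mulVec x = c • x := by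
      rw [Matrix.smul_mulVec, Matrix.one_mulVec]
    rw [h1]
    have : x ⬝ᵥ (c • x) = c * (x ⬝ᵥ x) := by
      rw [dotProduct_smul]; simp
    simpa [this] using mul_pos hc (dot_self_pos hx)

lemma quad_smul_one [DecidableEq ι] (c : ℝ) (v : ι → ℝ) :
    quad (c • (1 : Matrix ι ι ℝ)) v = c * (v ⬝ᵥ v) := by
  rw [quad, Matrix.smul_mulVec, Matrix.one_mulVec, dotProduct_smul]
  simp

lemma sum_mulVec {κ : Type*} (s : Finset κ) {ι' : Type*} [Fintype ι']
    (M : κ → Matrix ι ι' ℝ) (v : ι' → ℝ) :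
    (∑ t ∈ s, M t).mulVec v = ∑ t ∈ s, (M t).mulVec v := by
  classical
  induction s using Finset.induction_on with
  | empty => simp [Matrix.zero_mulVec]
  | insert _ _ hnot ih =>
    rw [Finset.sum_insert hnot, Finset.sum_insert hnot, Matrix.add_mulVec, ih]

lemma posDef_exists_pos_lb {k : ℕ} (P : Matrix (Fin k) (Fin k) ℝ) (hP : P.PosDef) :
    ∃ c : ℝ, 0 < c ∧ ∀ v : Fin k → ℝ, c * (v ⬝ᵥ v) ≤ quad P v := by
  rcases Nat.eq_zero_or_pos k with hk | hk
  · subst hk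
    exact ⟨1, one_pos, fun v => by simp [quad, dotProduct]⟩
  set R := CFC.sqrt P with hR
  have hRR : R * R = P := CFC.sqrt_mul_sqrt_self P hP.posSemidef.nonneg
  have hRsym : Rᵀ = R := herm_transpose R (CFC.sqrt_nonneg P).posSemidef.1
  have hdet : IsUnit R.det := by
    have h1 : R.det * R.det = P.det := by rw [← det_mul, hRR]
    have h2 : (0:ℝ) < P.det := hP.det_pos
    have h3 : R.det ≠ 0 := by intro h0; rw [h0, mul_zero] at h1; linarith
    exact isUnit_iff_ne_zero.mpr h3
  set N := R⁻¹ with hN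
  have hNR : N * R = 1 := nonsing_inv_mul R hdet
  have hq : ∀ v : Fin k → ℝ, quad P v = (R.mulVec v) ⬝ᵥ (R.mulVec v) := by
    intro v
    rw [quad, ← hRR, ← mulVec_mulVec, dotProduct_mulVec, ← vecMul_transpose, hRsym]
  have hvv : ∀ v : Fin k → ℝ, v ⬝ᵥ v = quad (Nᵀ * N) (R.mulVec v) := by
    intro v
    rw [quad, ← mulVec_mulVec, dotProduct_mulVec, vecMul_transpose,
      mulVec_mulVec]
    rw [hNR, one_mulVec]
  set K := ∑ i, ∑ j, |(Nᵀ * N) i j| with hK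
  have hbound : ∀ v : Fin k → ℝ, v ⬝ᵥ v ≤ K * quad P v := by
    intro v
    rw [hvv v, hq v]
    exact quad_le_sum_abs _ _
  have hKpos : 0 < K := by
    have i0 : Fin k := ⟨0, hk⟩
    set v : Fin k → ℝ := Pi.single i0 1 with hv
    have hv1 : v ⬝ᵥ v = 1 := by simp [hv, dotProduct, Pi.single_apply]
    have hqv : 0 < quad P v := by
      have hne : v ≠ 0 := by
        intro h0
        have := congrFun h0 i0
        simp [hv, Pi.single_apply] at this
      have := hP.re_dotProduct_pos hne
      simpa [quad] using this
    have h1 := hbound v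
    rw [hv1] at h1
    nlinarith [hqv, h1]
  refine ⟨K⁻¹, inv_pos.mpr hKpos, fun v => ?_⟩
  have h1 := hbound v
  calc K⁻¹ * (v ⬝ᵥ v) ≤ K⁻¹ * (K * quad P v) :=
        mul_le_mul_of_nonneg_left h1 (inv_nonneg.mpr hKpos.le)
    _ = quad P v := by field_simp

end quadfacts

section mv
variable {n m q o k : ℕ}
  (F : (Fin n → ℝ) → (Fin m → ℝ) → (Fin q → ℝ) → (Fin o → ℝ) → (Fin k → ℝ))

lemma fderiv_slice_x
    (hF : Differentiable ℝ (fun ζ : Pt n m q o => F ζ.1 ζ.2.1 ζ.2.2.1 ζ.2.2.2))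
    (ζ : Pt n m q o) (a : Fin n → ℝ) (i : Fin k) :
    fderiv ℝ (fun xv => F xv ζ.2.1 ζ.2.2.1 ζ.2.2.2 i) ζ.1 a
      = fderiv ℝ (fun ζ' : Pt n m q o => F ζ'.1 ζ'.2.1 ζ'.2.2.1 ζ'.2.2.2) ζ (a, 0, 0, 0) i := by
  set G : Pt n m q o → (Fin k → ℝ) := fun ζ' => F ζ'.1 ζ'.2.1 ζ'.2.2.1 ζ'.2.2.2 with hGdef
  set J : (Fin n → ℝ) →L[ℝ] Pt n m q o :=
    (ContinuousLinearMap.id ℝ (Fin n → ℝ)).prod 0 with hJ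
  have hι : HasFDerivAt (fun xv : Fin n → ℝ => ((xv, ζ.2) : Pt n m q o)) J ζ.1 :=
    (hasFDerivAt_id ζ.1).prodMk (hasFDerivAt_const ζ.2 ζ.1)
  have hG : HasFDerivAt G (fderiv ℝ G ζ) ζ := (hF ζ).hasFDerivAt
  have hG' : HasFDerivAt G (fderiv ℝ G ζ) ((ζ.1, ζ.2) : Pt n m q o) := by
    rwa [Prod.mk.eta]
  have hcomp : HasFDerivAt (fun xv : Fin n → ℝ => G (xv, ζ.2))
      ((fderiv ℝ G ζ).comp J) ζ.1 := by have := hG'.comp ζ.1 hι; exact this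
  have hscal : HasFDerivAt (fun xv : Fin n → ℝ => F xv ζ.2.1 ζ.2.2.1 ζ.2.2.2 i)
      ((ContinuousLinearMap.proj i).comp ((fderiv ℝ G ζ).comp J)) ζ.1 :=
    (ContinuousLinearMap.proj (R := ℝ) (φ := fun _ : Fin k => ℝ) i).hasFDerivAt.comp ζ.1 hcomp
  rw [hscal.fderiv]
  rfl

lemma fderiv_slice_w
    (hF : Differentiable ℝ (fun ζ : Pt n m q o => F ζ.1 ζ.2.1 ζ.2.2.1 ζ.2.2.2))
    (ζ : Pt n m q o) (a : Fin q → ℝ) (i : Fin k) :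
    fderiv ℝ (fun wv => F ζ.1 ζ.2.1 wv ζ.2.2.2 i) ζ.2.2.1 a
      = fderiv ℝ (fun ζ' : Pt n m q o => F ζ'.1 ζ'.2.1 ζ'.2.2.1 ζ'.2.2.2) ζ (0, 0, a, 0) i := by
  set G : Pt n m q o → (Fin k → ℝ) := fun ζ' => F ζ'.1 ζ'.2.1 ζ'.2.2.1 ζ'.2.2.2 with hGdef
  set J : (Fin q → ℝ) →L[ℝ] Pt n m q o :=
    (0 : (Fin q → ℝ) →L[ℝ] (Fin n → ℝ)).prod
      ((0 : (Fin q → ℝ) →L[ℝ] (Fin m → ℝ)).prod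
        ((ContinuousLinearMap.id ℝ (Fin q → ℝ)).prod 0)) with hJ
  have hι : HasFDerivAt
      (fun wv : Fin q → ℝ => ((ζ.1, ζ.2.1, wv, ζ.2.2.2) : Pt n m q o)) J ζ.2.2.1 :=
    (hasFDerivAt_const ζ.1 _).prodMk ((hasFDerivAt_const ζ.2.1 _).prodMk
      ((hasFDerivAt_id _).prodMk (hasFDerivAt_const ζ.2.2.2 _)))
  have hG' : HasFDerivAt G (fderiv ℝ G ζ) ((ζ.1, ζ.2.1, ζ.2.2.1, ζ.2.2.2) : Pt n m q o) := by
    have : ((ζ.1, ζ.2.1, ζ.2.2.1, ζ.2.2.2) : Pt n m q o) = ζ := by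
      simp [Prod.ext_iff]
    rw [this]; exact (hF ζ).hasFDerivAt
  have hcomp : HasFDerivAt (fun wv : Fin q → ℝ => G (ζ.1, ζ.2.1, wv, ζ.2.2.2))
      ((fderiv ℝ G ζ).comp J) ζ.2.2.1 := by have := hG'.comp ζ.2.2.1 hι; exact this
  have hscal : HasFDerivAt (fun wv : Fin q → ℝ => F ζ.1 ζ.2.1 wv ζ.2.2.2 i)
      ((ContinuousLinearMap.proj i).comp ((fderiv ℝ G ζ).comp J)) ζ.2.2.1 :=
    (ContinuousLinearMap.proj (R := ℝ) (φ := fun _ : Fin k => ℝ) i).hasFDerivAt.comp ζ.2.2.1 hcomp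
  rw [hscal.fderiv]
  rfl

lemma fderiv_slice_p
    (hF : Differentiable ℝ (fun ζ : Pt n m q o => F ζ.1 ζ.2.1 ζ.2.2.1 ζ.2.2.2))
    (ζ : Pt n m q o) (a : Fin o → ℝ) (i : Fin k) :
    fderiv ℝ (fun pv => F ζ.1 ζ.2.1 ζ.2.2.1 pv i) ζ.2.2.2 a
      = fderiv ℝ (fun ζ' : Pt n m q o => F ζ'.1 ζ'.2.1 ζ'.2.2.1 ζ'.2.2.2) ζ (0, 0, 0, a) i := by
  set G : Pt n m q o → (Fin k → ℝ) := fun ζ' => F ζ'.1 ζ'.2.1 ζ'.2.2.1 ζ'.2.2.2 with hGdef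
  set J : (Fin o → ℝ) →L[ℝ] Pt n m q o :=
    (0 : (Fin o → ℝ) →L[ℝ] (Fin n → ℝ)).prod
      ((0 : (Fin o → ℝ) →L[ℝ] (Fin m → ℝ)).prod
        ((0 : (Fin o → ℝ) →L[ℝ] (Fin q → ℝ)).prod (ContinuousLinearMap.id ℝ _))) with hJ
  have hι : HasFDerivAt
      (fun pv : Fin o → ℝ => ((ζ.1, ζ.2.1, ζ.2.2.1, pv) : Pt n m q o)) J ζ.2.2.2 :=
    (hasFDerivAt_const ζ.1 _).prodMk ((hasFDerivAt_const ζ.2.1 _).prodMk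
      ((hasFDerivAt_const ζ.2.2.1 _).prodMk (hasFDerivAt_id _)))
  have hG' : HasFDerivAt G (fderiv ℝ G ζ) ((ζ.1, ζ.2.1, ζ.2.2.1, ζ.2.2.2) : Pt n m q o) := by
    have : ((ζ.1, ζ.2.1, ζ.2.2.1, ζ.2.2.2) : Pt n m q o) = ζ := by
      simp [Prod.ext_iff]
    rw [this]; exact (hF ζ).hasFDerivAt
  have hcomp : HasFDerivAt (fun pv : Fin o → ℝ => G (ζ.1, ζ.2.1, ζ.2.2.1, pv))
      ((fderiv ℝ G ζ).comp J) ζ.2.2.2 := by have := hG'.comp ζ.2.2.2 hι; exact this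
  have hscal : HasFDerivAt (fun pv : Fin o → ℝ => F ζ.1 ζ.2.1 ζ.2.2.1 pv i)
      ((ContinuousLinearMap.proj i).comp ((fderiv ℝ G ζ).comp J)) ζ.2.2.2 :=
    (ContinuousLinearMap.proj (R := ℝ) (φ := fun _ : Fin k => ℝ) i).hasFDerivAt.comp ζ.2.2.2 hcomp
  rw [hscal.fderiv]
  rfl

lemma meanValueF
    (hF : ContDiff ℝ 1 (fun ζ : Pt n m q o => F ζ.1 ζ.2.1 ζ.2.2.1 ζ.2.2.2))
    (z zt : Pt n m q o) (hu : zt.2.1 = z.2.1) :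
    F zt.1 zt.2.1 zt.2.2.1 zt.2.2.2 - F z.1 z.2.1 z.2.2.1 z.2.2.2
      = Matrix.mulVec (fun i jj => ∫ s in (0:ℝ)..1,
          fderiv ℝ (fun xv => F xv (z + s • (zt - z)).2.1 (z + s • (zt - z)).2.2.1
            (z + s • (zt - z)).2.2.2 i) ((z + s • (zt - z)).1) (Pi.single jj 1)) (zt.1 - z.1)
      + Matrix.mulVec (fun i jj => ∫ s in (0:ℝ)..1,
          fderiv ℝ (fun wv => F (z + s • (zt - z)).1 (z + s • (zt - z)).2.1 wv
            (z + s • (zt - z)).2.2.2 i) ((z + s • (zt - z)).2.2.1) (Pi.single jj 1))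
          (zt.2.2.1 - z.2.2.1)
      + Matrix.mulVec (fun i jj => ∫ s in (0:ℝ)..1,
          fderiv ℝ (fun pv => F (z + s • (zt - z)).1 (z + s • (zt - z)).2.1
            (z + s • (zt - z)).2.2.1 pv i) ((z + s • (zt - z)).2.2.2) (Pi.single jj 1))
          (zt.2.2.2 - z.2.2.2) := by
  set G : Pt n m q o → (Fin k → ℝ) := fun ζ' => F ζ'.1 ζ'.2.1 ζ'.2.2.1 ζ'.2.2.2 with hGdef
  have hdiff : Differentiable ℝ G := hF.differentiable one_ne_zero
  set d : Pt n m q o := zt - z with hd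
  -- continuity of s ↦ D(ζ s) v i
  have happlycont : ∀ (v : Pt n m q o) (i : Fin k),
      Continuous fun s : ℝ => fderiv ℝ G (z + s • d) v i := by
    intro v i
    have h1 : Continuous fun s : ℝ => fderiv ℝ G (z + s • d) :=
      (hF.continuous_fderiv one_ne_zero).comp (by fun_prop)
    have h2 : Continuous fun L : Pt n m q o →L[ℝ] (Fin k → ℝ) => L v :=
      (ContinuousLinearMap.apply ℝ (Fin k → ℝ) v).continuous
    exact (continuous_apply i).comp (h2.comp h1)
  -- FTC
  have hFTC : ∀ i : Fin k, G zt i - G z i = ∫ s in (0:ℝ)..1, fderiv ℝ G (z + s • d) d i := by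
    intro i
    have hpath : ∀ s : ℝ, HasDerivAt (fun s' : ℝ => z + s' • d) d s := by
      intro s
      have h1 : HasDerivAt (fun s' : ℝ => s' • d) ((1:ℝ) • d) s :=
        (hasDerivAt_id s).smul_const d
      simpa using h1.const_add z
    have hderiv : ∀ s ∈ Set.uIcc (0:ℝ) 1,
        HasDerivAt (fun s' => G (z + s' • d) i) (fderiv ℝ G (z + s • d) d i) s := by
      intro s _
      have hG' : HasFDerivAt G (fderiv ℝ G (z + s • d)) (z + s • d) :=
        (hdiff _).hasFDerivAt
      exact (hasDerivAt_pi.mp (hG'.comp_hasDerivAt s (hpath s))) i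
    have := intervalIntegral.integral_eq_sub_of_hasDerivAt hderiv
      ((happlycont d i).intervalIntegrable 0 1)
    rw [this]
    rw [show z + (1:ℝ) • d = zt by rw [hd]; simp, show z + (0:ℝ) • d = z by simp]
  -- basis vectors
  funext i
  simp only [Pi.add_apply, Pi.sub_apply]
  have exd : ∀ j : Fin n, ∀ s : ℝ,
      fderiv ℝ (fun xv => F xv (z + s • (zt - z)).2.1 (z + s • (zt - z)).2.2.1
          (z + s • (zt - z)).2.2.2 i) ((z + s • (zt - z)).1) (Pi.single j 1)
        = fderiv ℝ G (z + s • d) ((Pi.single j 1, 0, 0, 0) : Pt n m q o) i := by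
    intro j s
    exact fderiv_slice_x F hdiff (z + s • (zt - z)) (Pi.single j 1) i
  have exw : ∀ j : Fin q, ∀ s : ℝ,
      fderiv ℝ (fun wv => F (z + s • (zt - z)).1 (z + s • (zt - z)).2.1 wv
          (z + s • (zt - z)).2.2.2 i) ((z + s • (zt - z)).2.2.1) (Pi.single j 1)
        = fderiv ℝ G (z + s • d) ((0, 0, Pi.single j 1, 0) : Pt n m q o) i := by
    intro j s
    exact fderiv_slice_w F hdiff (z + s • (zt - z)) (Pi.single j 1) i
  have exp' : ∀ j : Fin o, ∀ s : ℝ,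
      fderiv ℝ (fun pv => F (z + s • (zt - z)).1 (z + s • (zt - z)).2.1
          (z + s • (zt - z)).2.2.1 pv i) ((z + s • (zt - z)).2.2.2) (Pi.single j 1)
        = fderiv ℝ G (z + s • d) ((0, 0, 0, Pi.single j 1) : Pt n m q o) i := by
    intro j s
    exact fderiv_slice_p F hdiff (z + s • (zt - z)) (Pi.single j 1) i
  -- rewrite the three mulVec entries
  have hmulx : (Matrix.mulVec (fun i jj => ∫ s in (0:ℝ)..1,
      fderiv ℝ (fun xv => F xv (z + s • (zt - z)).2.1 (z + s • (zt - z)).2.2.1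
        (z + s • (zt - z)).2.2.2 i) ((z + s • (zt - z)).1) (Pi.single jj 1)) (zt.1 - z.1)) i
      = ∫ s in (0:ℝ)..1, fderiv ℝ G (z + s • d) (((zt.1 - z.1 : Fin n → ℝ), 0, 0, 0) : Pt n m q o) i := by
    simp only [Matrix.mulVec, dotProduct]
    have : ∀ j : Fin n, (∫ s in (0:ℝ)..1,
        fderiv ℝ (fun xv => F xv (z + s • (zt - z)).2.1 (z + s • (zt - z)).2.2.1
          (z + s • (zt - z)).2.2.2 i) ((z + s • (zt - z)).1) (Pi.single j 1)) * (zt.1 - z.1) j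
        = ∫ s in (0:ℝ)..1, (zt.1 - z.1) j *
            fderiv ℝ G (z + s • d) ((Pi.single j 1, 0, 0, 0) : Pt n m q o) i := by
      intro j
      rw [intervalIntegral.integral_congr (g := fun s =>
        fderiv ℝ G (z + s • d) ((Pi.single j 1, 0, 0, 0) : Pt n m q o) i) (fun s _ => exd j s)]
      rw [mul_comm, ← intervalIntegral.integral_const_mul]
    rw [Finset.sum_congr rfl (fun j _ => this j)]
    rw [← intervalIntegral.integral_finset_sum (fun j _ =>
      (Continuous.intervalIntegrable (by
        exact (continuous_const.mul (happlycont _ i))) 0 1))]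
    congr 1
    funext s
    have hvec : (((zt.1 - z.1 : Fin n → ℝ), 0, 0, 0) : Pt n m q o)
        = ∑ j : Fin n, (zt.1 - z.1) j • ((Pi.single j 1, 0, 0, 0) : Pt n m q o) := by
      rw [Prod.ext_iff]
      constructor
      · simp only [Prod.fst_sum, Prod.smul_mk]
        rw [show (zt.1 - z.1) = ∑ j : Fin n, Pi.single j ((zt.1 - z.1) j) from
          (Finset.univ_sum_single _).symm]
        congr 1
        funext j
        funext l
        by_cases hl : l = j <;> simp [Pi.single_apply, hl]
      · simp [Prod.ext_iff, Prod.snd_sum, Prod.smul_mk]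
    rw [hvec, map_sum]
    simp only [Finset.sum_apply, _root_.map_smul, Pi.smul_apply, smul_eq_mul, Pi.sub_apply]
  have hmulw : (Matrix.mulVec (fun i jj => ∫ s in (0:ℝ)..1,
      fderiv ℝ (fun wv => F (z + s • (zt - z)).1 (z + s • (zt - z)).2.1 wv
        (z + s • (zt - z)).2.2.2 i) ((z + s • (zt - z)).2.2.1) (Pi.single jj 1))
        (zt.2.2.1 - z.2.2.1)) i
      = ∫ s in (0:ℝ)..1, fderiv ℝ G (z + s • d)
          ((0, 0, (zt.2.2.1 - z.2.2.1 : Fin q → ℝ), 0) : Pt n m q o) i := by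
    simp only [Matrix.mulVec, dotProduct]
    have : ∀ j : Fin q, (∫ s in (0:ℝ)..1,
        fderiv ℝ (fun wv => F (z + s • (zt - z)).1 (z + s • (zt - z)).2.1 wv
          (z + s • (zt - z)).2.2.2 i) ((z + s • (zt - z)).2.2.1) (Pi.single j 1))
          * (zt.2.2.1 - z.2.2.1) j
        = ∫ s in (0:ℝ)..1, (zt.2.2.1 - z.2.2.1) j *
            fderiv ℝ G (z + s • d) ((0, 0, Pi.single j 1, 0) : Pt n m q o) i := by
      intro j
      rw [intervalIntegral.integral_congr (g := fun s =>
        fderiv ℝ G (z + s • d) ((0, 0, Pi.single j 1, 0) : Pt n m q o) i) (fun s _ => exw j s)]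
      rw [mul_comm, ← intervalIntegral.integral_const_mul]
    rw [Finset.sum_congr rfl (fun j _ => this j)]
    rw [← intervalIntegral.integral_finset_sum (fun j _ =>
      (Continuous.intervalIntegrable (by
        exact (continuous_const.mul (happlycont _ i))) 0 1))]
    congr 1
    funext s
    have hvec : ((0, 0, (zt.2.2.1 - z.2.2.1 : Fin q → ℝ), 0) : Pt n m q o)
        = ∑ j : Fin q, (zt.2.2.1 - z.2.2.1) j • ((0, 0, Pi.single j 1, 0) : Pt n m q o) := by
      rw [Prod.ext_iff]
      refine ⟨by simp [Prod.fst_sum], ?_⟩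
      rw [Prod.ext_iff]
      refine ⟨by simp [Prod.fst_sum, Prod.snd_sum], ?_⟩
      rw [Prod.ext_iff]
      refine ⟨?_, by simp [Prod.snd_sum]⟩
      simp only [Prod.snd_sum, Prod.fst_sum, Prod.smul_mk]
      rw [show (zt.2.2.1 - z.2.2.1) = ∑ j : Fin q, Pi.single j ((zt.2.2.1 - z.2.2.1) j) from
        (Finset.univ_sum_single _).symm]
      congr 1
      funext j
      funext l
      by_cases hl : l = j <;> simp [Pi.single_apply, hl]
    rw [hvec, map_sum]
    simp only [Finset.sum_apply, _root_.map_smul, Pi.smul_apply, smul_eq_mul, Pi.sub_apply]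
  have hmulp : (Matrix.mulVec (fun i jj => ∫ s in (0:ℝ)..1,
      fderiv ℝ (fun pv => F (z + s • (zt - z)).1 (z + s • (zt - z)).2.1
        (z + s • (zt - z)).2.2.1 pv i) ((z + s • (zt - z)).2.2.2) (Pi.single jj 1))
        (zt.2.2.2 - z.2.2.2)) i
      = ∫ s in (0:ℝ)..1, fderiv ℝ G (z + s • d)
          ((0, 0, 0, (zt.2.2.2 - z.2.2.2 : Fin o → ℝ)) : Pt n m q o) i := by
    simp only [Matrix.mulVec, dotProduct]
    have : ∀ j : Fin o, (∫ s in (0:ℝ)..1,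
        fderiv ℝ (fun pv => F (z + s • (zt - z)).1 (z + s • (zt - z)).2.1
          (z + s • (zt - z)).2.2.1 pv i) ((z + s • (zt - z)).2.2.2) (Pi.single j 1))
          * (zt.2.2.2 - z.2.2.2) j
        = ∫ s in (0:ℝ)..1, (zt.2.2.2 - z.2.2.2) j *
            fderiv ℝ G (z + s • d) ((0, 0, 0, Pi.single j 1) : Pt n m q o) i := by
      intro j
      rw [intervalIntegral.integral_congr (g := fun s =>
        fderiv ℝ G (z + s • d) ((0, 0, 0, Pi.single j 1) : Pt n m q o) i) (fun s _ => exp' j s)]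
      rw [mul_comm, ← intervalIntegral.integral_const_mul]
    rw [Finset.sum_congr rfl (fun j _ => this j)]
    rw [← intervalIntegral.integral_finset_sum (fun j _ =>
      (Continuous.intervalIntegrable (by
        exact (continuous_const.mul (happlycont _ i))) 0 1))]
    congr 1
    funext s
    have hvec : ((0, 0, 0, (zt.2.2.2 - z.2.2.2 : Fin o → ℝ)) : Pt n m q o)
        = ∑ j : Fin o, (zt.2.2.2 - z.2.2.2) j • ((0, 0, 0, Pi.single j 1) : Pt n m q o) := by
      rw [Prod.ext_iff]
      refine ⟨by simp [Prod.fst_sum], ?_⟩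
      rw [Prod.ext_iff]
      refine ⟨by simp [Prod.fst_sum, Prod.snd_sum], ?_⟩
      rw [Prod.ext_iff]
      refine ⟨by simp [Prod.snd_sum, Prod.fst_sum], ?_⟩
      simp only [Prod.snd_sum, Prod.smul_mk]
      rw [show (zt.2.2.2 - z.2.2.2) = ∑ j : Fin o, Pi.single j ((zt.2.2.2 - z.2.2.2) j) from
        (Finset.univ_sum_single _).symm]
      congr 1
      funext j
      funext l
      by_cases hl : l = j <;> simp [Pi.single_apply, hl]
    rw [hvec, map_sum]
    simp only [Finset.sum_apply, _root_.map_smul, Pi.smul_apply, smul_eq_mul, Pi.sub_apply]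
  rw [hmulx, hmulw, hmulp]
  have hLHS : F zt.1 zt.2.1 zt.2.2.1 zt.2.2.2 i - F z.1 z.2.1 z.2.2.1 z.2.2.2 i
      = G zt i - G z i := rfl
  rw [hLHS, hFTC i]
  have hdsplit : d = ((zt.1 - z.1, 0, 0, 0) : Pt n m q o)
      + ((0, 0, zt.2.2.1 - z.2.2.1, 0) : Pt n m q o)
      + ((0, 0, 0, zt.2.2.2 - z.2.2.2) : Pt n m q o) := by
    rw [hd]
    refine Prod.ext ?_ (Prod.ext ?_ (Prod.ext ?_ ?_)) <;>
      simp [Prod.fst_sub, Prod.snd_sub, hu]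
  have hsummand : ∀ s : ℝ, fderiv ℝ G (z + s • d) d i
      = fderiv ℝ G (z + s • d) ((zt.1 - z.1, 0, 0, 0) : Pt n m q o) i
        + fderiv ℝ G (z + s • d) ((0, 0, zt.2.2.1 - z.2.2.1, 0) : Pt n m q o) i
        + fderiv ℝ G (z + s • d) ((0, 0, 0, zt.2.2.2 - z.2.2.2) : Pt n m q o) i := by
    intro s
    set DD := fderiv ℝ G (z + s • d) with hDD
    rw [hdsplit]
    simp only [map_add, Pi.add_apply]
  rw [intervalIntegral.integral_congr (g := fun s =>
      fderiv ℝ G (z + s • d) ((zt.1 - z.1, 0, 0, 0) : Pt n m q o) i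
        + fderiv ℝ G (z + s • d) ((0, 0, zt.2.2.1 - z.2.2.1, 0) : Pt n m q o) i
        + fderiv ℝ G (z + s • d) ((0, 0, 0, zt.2.2.2 - z.2.2.2) : Pt n m q o) i)
      (fun s _ => hsummand s)]
  rw [intervalIntegral.integral_add (((happlycont _ i).fun_add (happlycont _ i)).intervalIntegrable 0 1)
    ((happlycont _ i).intervalIntegrable 0 1),
    intervalIntegral.integral_add ((happlycont _ i).intervalIntegrable 0 1)
    ((happlycont _ i).intervalIntegrable 0 1)]

end mv


lemma dot_add_le_two {ι : Type*} [Fintype ι] (a b : ι → ℝ) :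
    (a + b) ⬝ᵥ (a + b) ≤ 2 * (a ⬝ᵥ a) + 2 * (b ⬝ᵥ b) := by
  have hexp : (a + b) ⬝ᵥ (a + b) = a ⬝ᵥ a + 2 * (a ⬝ᵥ b) + b ⬝ᵥ b := by
    rw [add_dotProduct, dotProduct_add, dotProduct_add, dotProduct_comm b a]
    ring
  have h := Finset.sum_nonneg (fun i (_ : i ∈ Finset.univ) => mul_self_nonneg ((a - b) i))
  have hexp2 : (a - b) ⬝ᵥ (a - b) = a ⬝ᵥ a - 2 * (a ⬝ᵥ b) + b ⬝ᵥ b := by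
    rw [sub_dotProduct, dotProduct_sub, dotProduct_sub, dotProduct_comm b a]
    ring
  have h0 : (0:ℝ) ≤ (a - b) ⬝ᵥ (a - b) := h
  linarith [hexp2 ▸ h0]

lemma xi_step {n q o r' : ℕ} (A : Matrix (Fin n) (Fin n) ℝ) (B : Matrix (Fin n) (Fin q) ℝ)
    (E : Matrix (Fin n) (Fin o) ℝ) (C : Matrix (Fin r') (Fin n) ℝ)
    (D : Matrix (Fin r') (Fin q) ℝ) (Fm : Matrix (Fin r') (Fin o) ℝ)
    (Lm : Matrix (Fin n) (Fin r') ℝ) (Y Y' : Matrix (Fin n) (Fin o) ℝ)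
    (dx dx' : Fin n → ℝ) (dw : Fin q → ℝ) (dy : Fin r' → ℝ) (dp : Fin o → ℝ)
    (hdx' : dx' = A.mulVec dx + B.mulVec dw + E.mulVec dp)
    (hdy : dy = C.mulVec dx + D.mulVec dw + Fm.mulVec dp)
    (hY' : Y' = (A + Lm * C) * Y + E + Lm * Fm) :
    dx' - Y'.mulVec dp
      = (A + Lm * C).mulVec (dx - Y.mulVec dp)
        + (B + Lm * D).mulVec dw - Lm.mulVec dy := by
  subst hdx' hdy hY'
  simp only [Matrix.add_mulVec, Matrix.mulVec_add, Matrix.mulVec_sub, Matrix.sub_mulVec,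
    ← Matrix.mulVec_mulVec]
  abel

lemma ybar_eq {n q o r' : ℕ} (C : Matrix (Fin r') (Fin n) ℝ)
    (D : Matrix (Fin r') (Fin q) ℝ) (Fm : Matrix (Fin r') (Fin o) ℝ)
    (Y : Matrix (Fin n) (Fin o) ℝ)
    (dx : Fin n → ℝ) (dw : Fin q → ℝ) (dy : Fin r' → ℝ) (dp : Fin o → ℝ)
    (hdy : dy = C.mulVec dx + D.mulVec dw + Fm.mulVec dp) :
    (C * Y + Fm).mulVec dp = dy - D.mulVec dw - C.mulVec (dx - Y.mulVec dp) := by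
  subst hdy
  simp only [Matrix.add_mulVec, Matrix.mulVec_add, Matrix.mulVec_sub, Matrix.sub_mulVec,
    ← Matrix.mulVec_mulVec]
  abel

lemma quadP_contraction {n : ℕ} (P Φ : Matrix (Fin n) (Fin n) ℝ) (η : ℝ)
    (hps : ((η • P - Φᵀ * P * Φ) : Matrix (Fin n) (Fin n) ℝ).PosSemidef) (v : Fin n → ℝ) :
    quad P (Φ.mulVec v) ≤ η * quad P v := by
  have h := hps.dotProduct_mulVec_nonneg v
  simp only [star_trivial] at h
  have h' : (0:ℝ) ≤ v ⬝ᵥ (η • P - Φᵀ * P * Φ).mulVec v := by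
    simpa using h
  rw [Matrix.sub_mulVec, dotProduct_sub] at h'
  have h1 : v ⬝ᵥ (η • P).mulVec v = η * quad P v := by
    rw [Matrix.smul_mulVec, dotProduct_smul]
    simp [quad]
  have h2 : v ⬝ᵥ (Φᵀ * P * Φ).mulVec v = quad P (Φ.mulVec v) := by
    rw [mul_assoc Φᵀ P Φ, ← Matrix.mulVec_mulVec,
      dotProduct_mulVec, vecMul_transpose, ← Matrix.mulVec_mulVec]
    rfl
  rw [h1, h2] at h'
  linarith

lemma dot_sum {ι κ : Type*} [Fintype ι] (s : Finset κ) (a : ι → ℝ) (vs : κ → ι → ℝ) :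
    a ⬝ᵥ (∑ t ∈ s, vs t) = ∑ t ∈ s, a ⬝ᵥ vs t := by
  classical
  induction s using Finset.induction_on with
  | empty => simp
  | insert _ _ hnot ih => rw [Finset.sum_insert hnot, Finset.sum_insert hnot, dotProduct_add, ih]

lemma gram_lb {o' r' : ℕ} (T : ℕ) (μ α : ℝ) (N : ℕ → Matrix (Fin r') (Fin o') ℝ)
    (dp : Fin o' → ℝ)
    (hg : ((∑ s ∈ Finset.range T, μ ^ (T - 1 - s) • ((N s)ᵀ * N s))
      - α • (1 : Matrix (Fin o') (Fin o') ℝ)).PosSemidef) :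
    α * (dp ⬝ᵥ dp) ≤ ∑ s ∈ Finset.range T,
      μ ^ (T - 1 - s) * ((N s).mulVec dp ⬝ᵥ (N s).mulVec dp) := by
  have h := hg.dotProduct_mulVec_nonneg dp
  simp only [star_trivial] at h
  have h' : (0:ℝ) ≤ dp ⬝ᵥ ((∑ s ∈ Finset.range T, μ ^ (T - 1 - s) • ((N s)ᵀ * N s))
      - α • (1 : Matrix (Fin o') (Fin o') ℝ)).mulVec dp := by simpa using h
  rw [Matrix.sub_mulVec, dotProduct_sub] at h'
  have h1 : dp ⬝ᵥ (α • (1 : Matrix (Fin o') (Fin o') ℝ)).mulVec dp = α * (dp ⬝ᵥ dp) := by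
    rw [Matrix.smul_mulVec, Matrix.one_mulVec, dotProduct_smul]
    simp
  have hsum : (∑ s ∈ Finset.range T, μ ^ (T - 1 - s) • ((N s)ᵀ * N s)).mulVec dp
      = ∑ s ∈ Finset.range T, (μ ^ (T - 1 - s) • ((N s)ᵀ * N s)).mulVec dp := by
    classical
    induction (Finset.range T) using Finset.induction_on with
    | empty => simp [Matrix.zero_mulVec]
    | insert _ _ hnot ih =>
      rw [Finset.sum_insert hnot, Finset.sum_insert hnot, Matrix.add_mulVec, ih]
  have h2 : dp ⬝ᵥ (∑ s ∈ Finset.range T, μ ^ (T - 1 - s) • ((N s)ᵀ * N s)).mulVec dp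
      = ∑ s ∈ Finset.range T, μ ^ (T - 1 - s) * ((N s).mulVec dp ⬝ᵥ (N s).mulVec dp) := by
    rw [hsum]
    rw [dot_sum]
    refine Finset.sum_congr rfl fun s _ => ?_
    rw [Matrix.smul_mulVec, dotProduct_smul]
    have : dp ⬝ᵥ ((N s)ᵀ * N s).mulVec dp = (N s).mulVec dp ⬝ᵥ (N s).mulVec dp := by
      rw [← Matrix.mulVec_mulVec, dotProduct_mulVec, vecMul_transpose]
    rw [this]
    simp
  rw [h1, h2] at h'
  linarith

lemma telescope_bound (T : ℕ) (μ μ' βv : ℝ) (hμ : μ = μ' + βv) (hμ0 : 0 ≤ μ)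
    (V g : ℕ → ℝ) (hVnn : ∀ t, 0 ≤ V t)
    (hstep : ∀ t < T, V (t + 1) ≤ μ' * V t + g t) :
    ∑ t ∈ Finset.range T, μ ^ (T - 1 - t) * (βv * V t)
      ≤ μ ^ T * V 0 + ∑ t ∈ Finset.range T, μ ^ (T - 1 - t) * g t := by
  have key : ∀ t ∈ Finset.range T, μ ^ (T - 1 - t) * (βv * V t)
      ≤ (μ ^ (T - t) * V t - μ ^ (T - (t+1)) * V (t + 1)) + μ ^ (T - 1 - t) * g t := by
    intro t ht
    rw [Finset.mem_range] at ht
    have hexp : μ ^ (T - t) = μ * μ ^ (T - 1 - t) := by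
      rw [← pow_succ']
      congr 1
      omega
    have hidx : T - (t + 1) = T - 1 - t := by omega
    rw [hidx, hexp]
    have hs := hstep t ht
    have hpnn : (0:ℝ) ≤ μ ^ (T - 1 - t) := pow_nonneg hμ0 _
    have hβeq : βv = μ - μ' := by linarith
    rw [hβeq]
    nlinarith [mul_le_mul_of_nonneg_left hs hpnn]
  calc ∑ t ∈ Finset.range T, μ ^ (T - 1 - t) * (βv * V t)
      ≤ ∑ t ∈ Finset.range T,
          ((μ ^ (T - t) * V t - μ ^ (T - (t+1)) * V (t + 1)) + μ ^ (T - 1 - t) * g t) :=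
        Finset.sum_le_sum key
    _ = (∑ t ∈ Finset.range T, (μ ^ (T - t) * V t - μ ^ (T - (t+1)) * V (t + 1)))
          + ∑ t ∈ Finset.range T, μ ^ (T - 1 - t) * g t := by rw [Finset.sum_add_distrib]
    _ ≤ μ ^ T * V 0 + ∑ t ∈ Finset.range T, μ ^ (T - 1 - t) * g t := by
        have htel := Finset.sum_range_sub' (fun t => μ ^ (T - t) * V t) T
        rw [htel]
        have : (0:ℝ) ≤ μ ^ (T - T) * V T := mul_nonneg (pow_nonneg hμ0 _) (hVnn T)
        simp only [Nat.sub_zero] at *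
        linarith


end PropAux

set_option maxHeartbeats 1000000 in
/-- **Proposition 2 (sufficient condition for excitation).**
Under Assumptions 4 and 5, if the Gramian `𝒞_T = Σ_{t<T} μ^{T−1−t} Ȳ_tᵀȲ_t` built from
the transformed regressor `Ȳ_t = C_tY_t + F_t`, `Y_{t+1} = Φ_tY_t + E_t + L_tF_t`,
`Y_0 = 0`, satisfies `𝒞_T ⪰ αI` for some `α > 0`, then there exist `Q_p,S_p,R_p ≻ 0`
and `η_p ∈ [0,1)` (one may take `η_p = μ`, `S_p = αγI`) such that the trajectory pair
belongs to `𝔼_T` with `P_p = P`. -/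
theorem gramian_implies_excitation
    {n m q o r : ℕ}
    (f : (Fin n → ℝ) → (Fin m → ℝ) → (Fin q → ℝ) → (Fin o → ℝ) → (Fin n → ℝ))
    (h : (Fin n → ℝ) → (Fin m → ℝ) → (Fin q → ℝ) → (Fin o → ℝ) → (Fin r → ℝ))
    (hf : ContDiff ℝ 2 (fun z : Pt n m q o => f z.1 z.2.1 z.2.2.1 z.2.2.2))
    (hh : ContDiff ℝ 2 (fun z : Pt n m q o => h z.1 z.2.1 z.2.2.1 z.2.2.2))
    (Xs : Set (Fin n → ℝ)) (Us : Set (Fin m → ℝ)) (Ws : Set (Fin q → ℝ))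
    (Ps : Set (Fin o → ℝ))
    -- Assumption 4: bounded linearizations
    (Bbar Cbar Dbar : ℝ)
    (hB : ∀ z zt, ZmemT f Xs Us Ws Ps z → ZmemT f Xs Us Ws Ps zt →
      ∀ v : Fin q → ℝ, eucNorm ((Bmat f z zt).mulVec v) ≤ Bbar * eucNorm v)
    (hC : ∀ z zt, ZmemT f Xs Us Ws Ps z → ZmemT f Xs Us Ws Ps zt →
      ∀ v : Fin n → ℝ, eucNorm ((Cmat h z zt).mulVec v) ≤ Cbar * eucNorm v)
    (hD : ∀ z zt, ZmemT f Xs Us Ws Ps z → ZmemT f Xs Us Ws Ps zt →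
      ∀ v : Fin q → ℝ, eucNorm ((Dmat h z zt).mulVec v) ≤ Dbar * eucNorm v)
    -- Assumption 5: state detectability via output injection
    (L : Pt n m q o → Pt n m q o → Matrix (Fin n) (Fin r) ℝ)
    (Lbar : ℝ) (hLbar : 0 < Lbar)
    (hLbnd : ∀ z zt, ZmemT f Xs Us Ws Ps z → ZmemT f Xs Us Ws Ps zt →
      ∀ v : Fin r → ℝ, eucNorm ((L z zt).mulVec v) ≤ Lbar * eucNorm v)
    (P : Matrix (Fin n) (Fin n) ℝ) (hP : P.PosDef)
    (η : ℝ) (hη0 : 0 < η) (hη1 : η < 1)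
    (hΦ : ∀ z zt, ZmemT f Xs Us Ws Ps z → ZmemT f Xs Us Ws Ps zt →
      ((η • P - (Amat f z zt + L z zt * Cmat h z zt)ᵀ * P *
        (Amat f z zt + L z zt * Cmat h z zt)) : Matrix (Fin n) (Fin n) ℝ).PosSemidef)
    (lminP : ℝ)
    (hlminP : IsGreatest {l : ℝ | ∀ v : Fin n → ℝ, l * (v ⬝ᵥ v) ≤ quad P v} lminP)
    -- constants
    (T : ℕ) (hT : 1 ≤ T) (ε γ α : ℝ) (hε : 0 < ε) (hγ : 0 < γ) (hα : 0 < α)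
    (μ : ℝ) (hμdef : μ = (1 + ε) * η + 3 * γ * Cbar ^ 2 / lminP) (hμ1 : μ < 1)
    -- the trajectory pair of length T
    (x xt : ℕ → Fin n → ℝ) (u : ℕ → Fin m → ℝ) (w wt : ℕ → Fin q → ℝ)
    (p pt : Fin o → ℝ) (y yt : ℕ → Fin r → ℝ)
    (z zt : ℕ → Pt n m q o)
    (hz : ∀ s, z s = (x s, u s, w s, p)) (hzt : ∀ s, zt s = (xt s, u s, wt s, pt))
    (hZ : ∀ s < T, ZmemT f Xs Us Ws Ps (z s))
    (hZt : ∀ s < T, ZmemT f Xs Us Ws Ps (zt s))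
    (hdyn : ∀ s < T, x (s + 1) = f (x s) (u s) (w s) p)
    (hdynt : ∀ s < T, xt (s + 1) = f (xt s) (u s) (wt s) pt)
    (hy : ∀ s < T, y s = h (x s) (u s) (w s) p)
    (hyt : ∀ s < T, yt s = h (xt s) (u s) (wt s) pt)
    -- the regressor recursion
    (Y : ℕ → Matrix (Fin n) (Fin o) ℝ) (hY0 : Y 0 = 0)
    (hYrec : ∀ s < T, Y (s + 1)
      = (Amat f (z s) (zt s) + L (z s) (zt s) * Cmat h (z s) (zt s)) * Y s
        + Emat f (z s) (zt s) + L (z s) (zt s) * Fmat h (z s) (zt s))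
    -- the Gramian condition `𝒞_T ⪰ α I`
    (hGram : ((∑ s ∈ Finset.range T, μ ^ (T - 1 - s) •
        ((Cmat h (z s) (zt s) * Y s + Fmat h (z s) (zt s))ᵀ *
          (Cmat h (z s) (zt s) * Y s + Fmat h (z s) (zt s))))
        - α • (1 : Matrix (Fin o) (Fin o) ℝ)).PosSemidef) :
    ∃ (Qp Sp Rp : Matrix _ _ ℝ) (ηp : ℝ),
      Qp.PosDef ∧ Sp.PosDef ∧ Rp.PosDef ∧ 0 ≤ ηp ∧ ηp < 1
      ∧ ηp = μ ∧ Sp = (α * γ) • (1 : Matrix (Fin o) (Fin o) ℝ)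
      ∧ quad Sp (p - pt)
          ≤ ηp ^ T * quad P (x 0 - xt 0)
            + ∑ jj ∈ Finset.range T, ηp ^ (T - 1 - jj) *
                (quad Qp (w jj - wt jj) + quad Rp (y jj - yt jj))  := by
  classical
  obtain ⟨lb, hlb_pos, hlb⟩ := PropAux.posDef_exists_pos_lb P hP
  have hlmin_pos : 0 < lminP := lt_of_lt_of_le hlb_pos (hlminP.2 hlb)
  have hlmin : ∀ v : Fin n → ℝ, lminP * (v ⬝ᵥ v) ≤ quad P v := hlminP.1
  set dp : Fin o → ℝ := pt - p with hdp
  set dx : ℕ → Fin n → ℝ := fun t => xt t - x t with hdxd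
  set dw : ℕ → Fin q → ℝ := fun t => wt t - w t with hdwd
  set dy : ℕ → Fin r → ℝ := fun t => yt t - y t with hdyd
  set ξ : ℕ → Fin n → ℝ := fun t => dx t - (Y t).mulVec dp with hξd
  set V : ℕ → ℝ := fun t => quad P (ξ t) with hVd
  set K : ℝ := ∑ i, ∑ j, |P i j| with hKd
  have hKnn : 0 ≤ K := Finset.sum_nonneg fun i _ =>
    Finset.sum_nonneg fun j _ => abs_nonneg _
  have hεinv : (0:ℝ) < 1 + ε⁻¹ := by positivity
  have hfC1 : ContDiff ℝ 1 (fun z : Pt n m q o => f z.1 z.2.1 z.2.2.1 z.2.2.2) :=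
    hf.of_le one_le_two
  have hhC1 : ContDiff ℝ 1 (fun z : Pt n m q o => h z.1 z.2.1 z.2.2.1 z.2.2.2) :=
    hh.of_le one_le_two
  have hueq : ∀ s, (zt s).2.1 = (z s).2.1 := by intro s; rw [hz, hzt]
  have hVnn : ∀ t, 0 ≤ V t := fun t => PropAux.quad_nonneg_of_posSemidef hP.posSemidef _
  set β : ℝ := 3 * γ * Cbar ^ 2 / lminP with hβd
  have hβnn : 0 ≤ β := by positivity
  have hμβ : μ = (1 + ε) * η + β := hμdef
  have hμnn : 0 ≤ μ := by nlinarith [hη0, hε, hβnn]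
  set gfun : ℕ → ℝ := fun t =>
    (1+ε⁻¹) * K * (4*Bbar^2 + 4*Lbar^2*Dbar^2) * (dw t ⬝ᵥ dw t)
      + (1+ε⁻¹) * K * (2*Lbar^2) * (dy t ⬝ᵥ dy t) with hgf
  -- delta dynamics from the mean value theorem
  have hdynf : ∀ t, t < T → dx (t+1)
      = (Amat f (z t) (zt t)).mulVec (dx t) + (Bmat f (z t) (zt t)).mulVec (dw t)
        + (Emat f (z t) (zt t)).mulVec dp := by
    intro t ht
    have h0 := PropAux.meanValueF f hfC1 (z t) (zt t) (hueq t)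
    have hL1 : f (zt t).1 (zt t).2.1 (zt t).2.2.1 (zt t).2.2.2 = xt (t+1) := by
      rw [hzt t]; exact (hdynt t ht).symm
    have hL2 : f (z t).1 (z t).2.1 (z t).2.2.1 (z t).2.2.2 = x (t+1) := by
      rw [hz t]; exact (hdyn t ht).symm
    have ha : (zt t).1 - (z t).1 = dx t := by rw [hzt t, hz t]
    have hw' : (zt t).2.2.1 - (z t).2.2.1 = dw t := by rw [hzt t, hz t]
    have hp' : (zt t).2.2.2 - (z t).2.2.2 = dp := by rw [hzt t, hz t]
    rw [hL1, hL2, ha, hw', hp'] at h0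
    exact h0
  have houth : ∀ t, t < T → dy t
      = (Cmat h (z t) (zt t)).mulVec (dx t) + (Dmat h (z t) (zt t)).mulVec (dw t)
        + (Fmat h (z t) (zt t)).mulVec dp := by
    intro t ht
    have h0 := PropAux.meanValueF h hhC1 (z t) (zt t) (hueq t)
    have hL1 : h (zt t).1 (zt t).2.1 (zt t).2.2.1 (zt t).2.2.2 = yt t := by
      rw [hzt t]; exact (hyt t ht).symm
    have hL2 : h (z t).1 (z t).2.1 (z t).2.2.1 (z t).2.2.2 = y t := by
      rw [hz t]; exact (hy t ht).symm
    have ha : (zt t).1 - (z t).1 = dx t := by rw [hzt t, hz t]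
    have hw' : (zt t).2.2.1 - (z t).2.2.1 = dw t := by rw [hzt t, hz t]
    have hp' : (zt t).2.2.2 - (z t).2.2.2 = dp := by rw [hzt t, hz t]
    rw [hL1, hL2, ha, hw', hp'] at h0
    simp only [hdyd]
    exact h0
  -- error recursion
  have hxi : ∀ t, t < T → ξ (t+1)
      = (Amat f (z t) (zt t) + L (z t) (zt t) * Cmat h (z t) (zt t)).mulVec (ξ t)
        + (Bmat f (z t) (zt t) + L (z t) (zt t) * Dmat h (z t) (zt t)).mulVec (dw t)
        - (L (z t) (zt t)).mulVec (dy t) := by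
    intro t ht
    simp only [hξd]
    exact PropAux.xi_step _ _ _ _ _ _ _ _ _ _ _ _ _ _ (hdynf t ht) (houth t ht) (hYrec t ht)
  -- Lyapunov step
  have hstepV : ∀ t, t < T → V (t+1) ≤ ((1+ε)*η) * V t + gfun t := by
    intro t ht
    have memz := hZ t ht
    have memzt := hZt t ht
    set Φt := Amat f (z t) (zt t) + L (z t) (zt t) * Cmat h (z t) (zt t) with hΦt
    set rv := (Bmat f (z t) (zt t) + L (z t) (zt t) * Dmat h (z t) (zt t)).mulVec (dw t)
      - (L (z t) (zt t)).mulVec (dy t) with hrv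
    have hxieq : ξ (t+1) = Φt.mulVec (ξ t) + rv := by
      rw [hxi t ht, hrv, hΦt]
      abel
    have hyoung := PropAux.quad_young hP.posSemidef ε hε (Φt.mulVec (ξ t)) rv
    have hcontr : quad P (Φt.mulVec (ξ t)) ≤ η * V t :=
      PropAux.quadP_contraction P Φt η (hΦ (z t) (zt t) memz memzt) (ξ t)
    have hsplit : (Bmat f (z t) (zt t) + L (z t) (zt t) * Dmat h (z t) (zt t)).mulVec (dw t)
        = (Bmat f (z t) (zt t)).mulVec (dw t)
          + (L (z t) (zt t)).mulVec ((Dmat h (z t) (zt t)).mulVec (dw t)) := by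
      rw [Matrix.add_mulVec, Matrix.mulVec_mulVec]
    have hBdw : (Bmat f (z t) (zt t)).mulVec (dw t) ⬝ᵥ (Bmat f (z t) (zt t)).mulVec (dw t)
        ≤ Bbar^2 * (dw t ⬝ᵥ dw t) := PropAux.sq_enorm_le (hB _ _ memz memzt (dw t))
    have hDdw : (Dmat h (z t) (zt t)).mulVec (dw t) ⬝ᵥ (Dmat h (z t) (zt t)).mulVec (dw t)
        ≤ Dbar^2 * (dw t ⬝ᵥ dw t) := PropAux.sq_enorm_le (hD _ _ memz memzt (dw t))
    have hLDdw : (L (z t) (zt t)).mulVec ((Dmat h (z t) (zt t)).mulVec (dw t))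
          ⬝ᵥ (L (z t) (zt t)).mulVec ((Dmat h (z t) (zt t)).mulVec (dw t))
        ≤ Lbar^2 * ((Dmat h (z t) (zt t)).mulVec (dw t) ⬝ᵥ (Dmat h (z t) (zt t)).mulVec (dw t)) :=
      PropAux.sq_enorm_le (hLbnd _ _ memz memzt _)
    have hLdy : (L (z t) (zt t)).mulVec (dy t) ⬝ᵥ (L (z t) (zt t)).mulVec (dy t)
        ≤ Lbar^2 * (dy t ⬝ᵥ dy t) := PropAux.sq_enorm_le (hLbnd _ _ memz memzt _)
    have hrv2 : rv ⬝ᵥ rv ≤ (4*Bbar^2 + 4*Lbar^2*Dbar^2) * (dw t ⬝ᵥ dw t)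
        + 2*Lbar^2 * (dy t ⬝ᵥ dy t) := by
      rw [hrv, hsplit]
      have h2 := PropAux.dot_sub_le_two
        ((Bmat f (z t) (zt t)).mulVec (dw t)
          + (L (z t) (zt t)).mulVec ((Dmat h (z t) (zt t)).mulVec (dw t)))
        ((L (z t) (zt t)).mulVec (dy t))
      have h3 := PropAux.dot_add_le_two ((Bmat f (z t) (zt t)).mulVec (dw t))
        ((L (z t) (zt t)).mulVec ((Dmat h (z t) (zt t)).mulVec (dw t)))
      have h4 : Lbar^2 * ((Dmat h (z t) (zt t)).mulVec (dw t)
            ⬝ᵥ (Dmat h (z t) (zt t)).mulVec (dw t))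
          ≤ Lbar^2 * (Dbar^2 * (dw t ⬝ᵥ dw t)) :=
        mul_le_mul_of_nonneg_left hDdw (sq_nonneg Lbar)
      nlinarith [h2, h3, hBdw, hLDdw, h4, hLdy]
    have hq1 : V (t+1) = quad P (Φt.mulVec (ξ t) + rv) := by
      simp only [hVd]
      rw [hxieq]
    have hq2 : quad P rv ≤ K * (rv ⬝ᵥ rv) := by
      rw [hKd]; exact PropAux.quad_le_sum_abs P rv
    have step2 : (1+ε) * quad P (Φt.mulVec (ξ t)) + (1+ε⁻¹) * quad P rv
        ≤ (1+ε) * (η * V t) + (1+ε⁻¹) * (K * (rv ⬝ᵥ rv)) := by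
      have ha1 : (0:ℝ) ≤ 1 + ε := by positivity
      exact add_le_add (mul_le_mul_of_nonneg_left hcontr ha1)
        (mul_le_mul_of_nonneg_left hq2 hεinv.le)
    have step3 : (1+ε⁻¹) * (K * (rv ⬝ᵥ rv))
        ≤ (1+ε⁻¹) * (K * ((4*Bbar^2 + 4*Lbar^2*Dbar^2) * (dw t ⬝ᵥ dw t)
            + 2*Lbar^2 * (dy t ⬝ᵥ dy t))) :=
      mul_le_mul_of_nonneg_left (mul_le_mul_of_nonneg_left hrv2 hKnn) hεinv.le
    have hfin : V (t+1) ≤ (1+ε) * (η * V t)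
        + (1+ε⁻¹) * (K * ((4*Bbar^2 + 4*Lbar^2*Dbar^2) * (dw t ⬝ᵥ dw t)
            + 2*Lbar^2 * (dy t ⬝ᵥ dy t))) := by
      rw [hq1]
      linarith [hyoung, step2, step3]
    calc V (t+1) ≤ (1+ε) * (η * V t)
        + (1+ε⁻¹) * (K * ((4*Bbar^2 + 4*Lbar^2*Dbar^2) * (dw t ⬝ᵥ dw t)
            + 2*Lbar^2 * (dy t ⬝ᵥ dy t))) := hfin
      _ = ((1+ε)*η) * V t + gfun t := by simp only [hgf]; ring
  -- output error bound via the regressor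
  have hub : ∀ t, t < T →
      γ * (((Cmat h (z t) (zt t) * Y t + Fmat h (z t) (zt t)).mulVec dp)
        ⬝ᵥ ((Cmat h (z t) (zt t) * Y t + Fmat h (z t) (zt t)).mulVec dp))
      ≤ 3*γ * (dy t ⬝ᵥ dy t) + 3*γ*Dbar^2 * (dw t ⬝ᵥ dw t) + β * V t := by
    intro t ht
    have memz := hZ t ht
    have memzt := hZt t ht
    have heq := PropAux.ybar_eq (Cmat h (z t) (zt t)) (Dmat h (z t) (zt t))
      (Fmat h (z t) (zt t)) (Y t) (dx t) (dw t) (dy t) dp (houth t ht)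
    rw [heq]
    have h3 := PropAux.dot_sub_sub_le_three (dy t) ((Dmat h (z t) (zt t)).mulVec (dw t))
      ((Cmat h (z t) (zt t)).mulVec (dx t - (Y t).mulVec dp))
    have hDdw : (Dmat h (z t) (zt t)).mulVec (dw t) ⬝ᵥ (Dmat h (z t) (zt t)).mulVec (dw t)
        ≤ Dbar^2 * (dw t ⬝ᵥ dw t) := PropAux.sq_enorm_le (hD _ _ memz memzt (dw t))
    have hCxi : (Cmat h (z t) (zt t)).mulVec (dx t - (Y t).mulVec dp)
          ⬝ᵥ (Cmat h (z t) (zt t)).mulVec (dx t - (Y t).mulVec dp)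
        ≤ Cbar^2 * ((dx t - (Y t).mulVec dp) ⬝ᵥ (dx t - (Y t).mulVec dp)) :=
      PropAux.sq_enorm_le (hC _ _ memz memzt _)
    have hVt : V t = quad P (dx t - (Y t).mulVec dp) := by simp only [hVd, hξd]
    have hξV : lminP * ((dx t - (Y t).mulVec dp) ⬝ᵥ (dx t - (Y t).mulVec dp)) ≤ V t := by
      rw [hVt]; exact hlmin _
    have hkey : 3*γ*Cbar^2 * ((dx t - (Y t).mulVec dp) ⬝ᵥ (dx t - (Y t).mulVec dp))
        ≤ β * V t := by
      have h0 : (0:ℝ) ≤ 3*γ*Cbar^2/lminP := by positivity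
      have h1 := mul_le_mul_of_nonneg_left hξV h0
      have hgen : ∀ X : ℝ, 3*γ*Cbar^2 * X = (3*γ*Cbar^2/lminP) * (lminP * X) := by
        intro X; field_simp
      calc 3*γ*Cbar^2 * ((dx t - (Y t).mulVec dp) ⬝ᵥ (dx t - (Y t).mulVec dp))
          = (3*γ*Cbar^2/lminP) * (lminP * ((dx t - (Y t).mulVec dp)
              ⬝ᵥ (dx t - (Y t).mulVec dp))) := hgen _
        _ ≤ (3*γ*Cbar^2/lminP) * V t := h1
        _ = β * V t := by rw [hβd]
    have hg3 := mul_le_mul_of_nonneg_left h3 hγ.le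
    have hgD := mul_le_mul_of_nonneg_left hDdw (by positivity : (0:ℝ) ≤ 3*γ)
    have hgC := mul_le_mul_of_nonneg_left hCxi (by positivity : (0:ℝ) ≤ 3*γ)
    nlinarith [hg3, hgD, hgC, hkey]
  -- Gramian lower bound
  have hgram := PropAux.gram_lb T μ α
    (fun s => Cmat h (z s) (zt s) * Y s + Fmat h (z s) (zt s)) dp hGram
  -- telescoping
  have htel := PropAux.telescope_bound T μ ((1+ε)*η) β hμβ hμnn V gfun hVnn hstepV
  -- initial value
  have hV0 : V 0 = quad P (x 0 - xt 0) := by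
    simp only [hVd, hξd, hdxd, hY0, Matrix.zero_mulVec, sub_zero]
    rw [show xt 0 - x 0 = -(x 0 - xt 0) from (neg_sub (x 0) (xt 0)).symm, PropAux.quad_neg]
  -- constants for Q_p and R_p
  set qc : ℝ := 3*γ*Dbar^2 + (1+ε⁻¹)*K*(4*Bbar^2+4*Lbar^2*Dbar^2) + γ with hqc
  set rc : ℝ := 3*γ + (1+ε⁻¹)*K*(2*Lbar^2) with hrc
  have hqcpos : 0 < qc := by
    have h1 : (0:ℝ) ≤ 3*γ*Dbar^2 := by positivity
    have h2 : (0:ℝ) ≤ (1+ε⁻¹)*K*(4*Bbar^2+4*Lbar^2*Dbar^2) :=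
      mul_nonneg (mul_nonneg hεinv.le hKnn) (by positivity)
    rw [hqc]; linarith [hγ]
  have hrcpos : 0 < rc := by
    have h2 : (0:ℝ) ≤ (1+ε⁻¹)*K*(2*Lbar^2) :=
      mul_nonneg (mul_nonneg hεinv.le hKnn) (by positivity)
    rw [hrc]; linarith [hγ]
  refine ⟨qc • 1, (α*γ) • 1, rc • 1, μ, PropAux.posDef_smul_one hqcpos,
    PropAux.posDef_smul_one (by positivity), PropAux.posDef_smul_one hrcpos,
    hμnn, hμ1, rfl, rfl, ?_⟩
  -- the final chain
  have hLHS : quad ((α*γ) • (1 : Matrix (Fin o) (Fin o) ℝ)) (p - pt) = α*γ * (dp ⬝ᵥ dp) := by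
    rw [PropAux.quad_smul_one, PropAux.dot_sub_comm p pt, hdp]
  have hchain1 : α*γ * (dp ⬝ᵥ dp) ≤ γ * ∑ s ∈ Finset.range T, μ ^ (T - 1 - s)
      * ((Cmat h (z s) (zt s) * Y s + Fmat h (z s) (zt s)).mulVec dp
        ⬝ᵥ (Cmat h (z s) (zt s) * Y s + Fmat h (z s) (zt s)).mulVec dp) := by
    have := mul_le_mul_of_nonneg_left hgram hγ.le
    calc α*γ * (dp ⬝ᵥ dp) = γ * (α * (dp ⬝ᵥ dp)) := by ring
      _ ≤ _ := this
  have hchain2 : γ * ∑ s ∈ Finset.range T, μ ^ (T - 1 - s)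
      * ((Cmat h (z s) (zt s) * Y s + Fmat h (z s) (zt s)).mulVec dp
        ⬝ᵥ (Cmat h (z s) (zt s) * Y s + Fmat h (z s) (zt s)).mulVec dp)
      ≤ ∑ t ∈ Finset.range T, μ ^ (T - 1 - t)
          * (3*γ * (dy t ⬝ᵥ dy t) + 3*γ*Dbar^2 * (dw t ⬝ᵥ dw t) + β * V t) := by
    rw [Finset.mul_sum]
    refine Finset.sum_le_sum fun t ht => ?_
    rw [Finset.mem_range] at ht
    have hpnn : (0:ℝ) ≤ μ ^ (T - 1 - t) := pow_nonneg hμnn _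
    calc γ * (μ ^ (T - 1 - t)
        * ((Cmat h (z t) (zt t) * Y t + Fmat h (z t) (zt t)).mulVec dp
          ⬝ᵥ (Cmat h (z t) (zt t) * Y t + Fmat h (z t) (zt t)).mulVec dp))
        = μ ^ (T - 1 - t) * (γ * ((Cmat h (z t) (zt t) * Y t
            + Fmat h (z t) (zt t)).mulVec dp
          ⬝ᵥ (Cmat h (z t) (zt t) * Y t + Fmat h (z t) (zt t)).mulVec dp)) := by ring
      _ ≤ μ ^ (T - 1 - t) * (3*γ * (dy t ⬝ᵥ dy t) + 3*γ*Dbar^2 * (dw t ⬝ᵥ dw t)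
            + β * V t) := mul_le_mul_of_nonneg_left (hub t ht) hpnn
  have hchain3 : ∑ t ∈ Finset.range T, μ ^ (T - 1 - t)
        * (3*γ * (dy t ⬝ᵥ dy t) + 3*γ*Dbar^2 * (dw t ⬝ᵥ dw t) + β * V t)
      = (∑ t ∈ Finset.range T, μ ^ (T - 1 - t)
          * (3*γ * (dy t ⬝ᵥ dy t) + 3*γ*Dbar^2 * (dw t ⬝ᵥ dw t)))
        + ∑ t ∈ Finset.range T, μ ^ (T - 1 - t) * (β * V t) := by
    rw [← Finset.sum_add_distrib]
    refine Finset.sum_congr rfl fun t _ => by ring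
  have hchain4 : (∑ t ∈ Finset.range T, μ ^ (T - 1 - t)
          * (3*γ * (dy t ⬝ᵥ dy t) + 3*γ*Dbar^2 * (dw t ⬝ᵥ dw t)))
        + ∑ t ∈ Finset.range T, μ ^ (T - 1 - t) * (β * V t)
      ≤ μ ^ T * quad P (x 0 - xt 0)
        + ∑ t ∈ Finset.range T, μ ^ (T - 1 - t)
            * (3*γ * (dy t ⬝ᵥ dy t) + 3*γ*Dbar^2 * (dw t ⬝ᵥ dw t) + gfun t) := by
    rw [← hV0]
    have hsplit : ∑ t ∈ Finset.range T, μ ^ (T - 1 - t)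
          * (3*γ * (dy t ⬝ᵥ dy t) + 3*γ*Dbar^2 * (dw t ⬝ᵥ dw t) + gfun t)
        = (∑ t ∈ Finset.range T, μ ^ (T - 1 - t)
            * (3*γ * (dy t ⬝ᵥ dy t) + 3*γ*Dbar^2 * (dw t ⬝ᵥ dw t)))
          + ∑ t ∈ Finset.range T, μ ^ (T - 1 - t) * gfun t := by
      rw [← Finset.sum_add_distrib]
      refine Finset.sum_congr rfl fun t _ => by ring
    rw [hsplit]
    linarith [htel]
  have hchain5 : ∑ t ∈ Finset.range T, μ ^ (T - 1 - t)
        * (3*γ * (dy t ⬝ᵥ dy t) + 3*γ*Dbar^2 * (dw t ⬝ᵥ dw t) + gfun t)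
      ≤ ∑ jj ∈ Finset.range T, μ ^ (T - 1 - jj) *
          (quad (qc • (1 : Matrix (Fin q) (Fin q) ℝ)) (w jj - wt jj)
            + quad (rc • (1 : Matrix (Fin r) (Fin r) ℝ)) (y jj - yt jj)) := by
    refine Finset.sum_le_sum fun t _ => ?_
    have hpnn : (0:ℝ) ≤ μ ^ (T - 1 - t) := pow_nonneg hμnn _
    refine mul_le_mul_of_nonneg_left ?_ hpnn
    have hw1 : (w t - wt t) ⬝ᵥ (w t - wt t) = dw t ⬝ᵥ dw t := by
      rw [hdwd]
      exact PropAux.dot_sub_comm (w t) (wt t)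
    have hy1 : (y t - yt t) ⬝ᵥ (y t - yt t) = dy t ⬝ᵥ dy t := by
      rw [hdyd]
      exact PropAux.dot_sub_comm (y t) (yt t)
    rw [PropAux.quad_smul_one, PropAux.quad_smul_one, hw1, hy1]
    have hdwnn : (0:ℝ) ≤ dw t ⬝ᵥ dw t := PropAux.dot_self_nonneg _
    have hdynn : (0:ℝ) ≤ dy t ⬝ᵥ dy t := PropAux.dot_self_nonneg _
    simp only [hgf, hqc, hrc]
    nlinarith [hγ, hdwnn, hdynn]
  rw [hLHS]
  calc α*γ * (dp ⬝ᵥ dp)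
      ≤ γ * ∑ s ∈ Finset.range T, μ ^ (T - 1 - s)
        * ((Cmat h (z s) (zt s) * Y s + Fmat h (z s) (zt s)).mulVec dp
          ⬝ᵥ (Cmat h (z s) (zt s) * Y s + Fmat h (z s) (zt s)).mulVec dp) := hchain1
    _ ≤ ∑ t ∈ Finset.range T, μ ^ (T - 1 - t)
          * (3*γ * (dy t ⬝ᵥ dy t) + 3*γ*Dbar^2 * (dw t ⬝ᵥ dw t) + β * V t) := hchain2
    _ ≤ μ ^ T * quad P (x 0 - xt 0)
        + ∑ t ∈ Finset.range T, μ ^ (T - 1 - t)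
            * (3*γ * (dy t ⬝ᵥ dy t) + 3*γ*Dbar^2 * (dw t ⬝ᵥ dw t) + gfun t) := by
        rw [hchain3]; exact hchain4
    _ ≤ μ ^ T * quad P (x 0 - xt 0)
        + ∑ jj ∈ Finset.range T, μ ^ (T - 1 - jj) *
            (quad (qc • (1 : Matrix (Fin q) (Fin q) ℝ)) (w jj - wt jj)
              + quad (rc • (1 : Matrix (Fin r) (Fin r) ℝ)) (y jj - yt jj)) := by
        linarith [hchain5]
end

section
/- (Time-partition discount inequality) Let N ≥ 1 and κ ≥ 0 be integers, and let k, j, l ∈ ℕ with l ≤ N−1 and i_1, …, i_k ∈ ℕ satisfy j ≤ κ, i_m ≤ κ for all m ∈ [1,k], and t = l + Σ_{m=1}^{k}(i_m+1)N + jN. Let μ, ρ_N, η̃ ∈ [0,1) with μ̄ := max{μ, ρ_N} ∈ (0,1) and η̃ ≤ μ̄, and set μ_κ := μ̄^{1/(κ+1)}. Then: (i) μ^{sN} ≤ μ_κ^{Σ_{m=1}^{s}(i_m+1)N} for every s ∈ [0,k]; and (ii) μ^{kN} η̃^{l} ≤ μ_κ^{−κN} μ_κ^{t} (and likewise μ^{kN}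 η₁^{l} ≤ μ_κ^{−κN} μ_κ^{t} for any η₁ ∈ [0, μ_κ]). -/
/-- **Time-partition discount inequality.**
Let `t = l + Σ_{m=1}^{k}(i_m+1)N + jN` with `l ≤ N−1`, `j ≤ κ`, `i_m ≤ κ`,
`μ, ρ_N, η̃ ∈ [0,1)`, `μ̄ := max{μ,ρ_N} ∈ (0,1)`, `η̃ ≤ μ̄` and `μ_κ := μ̄^{1/(κ+1)}`. Then
(i) `μ^{sN} ≤ μ_κ^{Σ_{m=1}^{s}(i_m+1)N}` for all `s ≤ k`, and
(ii) `μ^{kN} η̃^{l} ≤ μ_κ^{−κN} μ_κ^{t}`, and likewise with `η̃` replaced by any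
`η₁ ∈ [0, μ_κ]`. -/
theorem time_partition_discount_inequality
    (N κ : ℕ) (hN : 1 ≤ N)
    (k j l : ℕ) (hl : l ≤ N - 1) (i : ℕ → ℕ)
    (hj : j ≤ κ) (hi : ∀ m, 1 ≤ m → m ≤ k → i m ≤ κ)
    (t : ℕ) (ht : t = l + (∑ m ∈ Finset.Icc 1 k, (i m + 1) * N) + j * N)
    (μ ρN ηt : ℝ)
    (hμ0 : 0 ≤ μ) (hμ1 : μ < 1) (hρ0 : 0 ≤ ρN) (hρ1 : ρN < 1)
    (hηt0 : 0 ≤ ηt) (hηt1 : ηt < 1)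
    (hμbar : 0 < max μ ρN) (hηtle : ηt ≤ max μ ρN)
    (μκ : ℝ) (hμκ : μκ = (max μ ρN) ^ ((1 : ℝ) / (κ + 1))) :
    (∀ s : ℕ, s ≤ k →
        μ ^ (s * N) ≤ μκ ^ (∑ m ∈ Finset.Icc 1 s, (i m + 1) * N))
    ∧ μ ^ (k * N) * ηt ^ l ≤ (μκ ^ (κ * N))⁻¹ * μκ ^ t
    ∧ ∀ η₁ : ℝ, 0 ≤ η₁ → η₁ ≤ μκ →
        μ ^ (k * N) * η₁ ^ l ≤ (μκ ^ (κ * N))⁻¹ * μκ ^ t := by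
  set μb := max μ ρN with hμb
  have hμb1 : μb < 1 := max_lt hμ1 hρ1
  have hμκ0 : 0 < μκ := by rw [hμκ]; exact Real.rpow_pos_of_pos hμbar _
  have hμκ1 : μκ ≤ 1 := by
    rw [hμκ]
    exact Real.rpow_le_one hμbar.le hμb1.le (by positivity)
  have hkey : μκ ^ (κ + 1) = μb := by
    rw [hμκ, ← Real.rpow_natCast (μb ^ ((1:ℝ)/(κ+1))) (κ+1),
      ← Real.rpow_mul hμbar.le]
    have : (1:ℝ)/(κ+1) * ((κ+1 : ℕ) : ℝ) = 1 := by
      push_cast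
      field_simp
    rw [this, Real.rpow_one]
  have hμle : μ ≤ μκ ^ (κ + 1) := by rw [hkey]; exact le_max_left _ _
  have hμbμκ : μb ≤ μκ := by
    rw [← hkey]
    calc μκ ^ (κ + 1) ≤ μκ ^ 1 :=
          pow_le_pow_of_le_one hμκ0.le hμκ1 (Nat.le_add_left 1 κ)
      _ = μκ := pow_one μκ
  -- part (i)
  have part1 : ∀ s : ℕ, s ≤ k →
      μ ^ (s * N) ≤ μκ ^ (∑ m ∈ Finset.Icc 1 s, (i m + 1) * N) := by
    intro s hs
    have h1 : μ ^ (s * N) ≤ (μκ ^ (κ + 1)) ^ (s * N) :=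
      pow_le_pow_left₀ hμ0 hμle _
    have h2 : (μκ ^ (κ + 1)) ^ (s * N) = μκ ^ ((κ + 1) * (s * N)) := by
      rw [← pow_mul]
    have hsum : (∑ m ∈ Finset.Icc 1 s, (i m + 1) * N) ≤ (κ + 1) * (s * N) := by
      calc (∑ m ∈ Finset.Icc 1 s, (i m + 1) * N)
          ≤ ∑ m ∈ Finset.Icc 1 s, (κ + 1) * N := by
            apply Finset.sum_le_sum
            intro m hm
            simp only [Finset.mem_Icc] at hm
            exact Nat.mul_le_mul_right N (Nat.succ_le_succ (hi m hm.1 (hm.2.trans hs)))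
        _ = s * ((κ + 1) * N) := by
            rw [Finset.sum_const, Nat.card_Icc]
            simp [smul_eq_mul]
        _ = (κ + 1) * (s * N) := by ring
    calc μ ^ (s * N) ≤ μκ ^ ((κ + 1) * (s * N)) := h1.trans_eq h2
      _ ≤ μκ ^ (∑ m ∈ Finset.Icc 1 s, (i m + 1) * N) :=
          pow_le_pow_of_le_one hμκ0.le hμκ1 hsum
  -- general part (ii)
  have part2 : ∀ η₁ : ℝ, 0 ≤ η₁ → η₁ ≤ μκ →
      μ ^ (k * N) * η₁ ^ l ≤ (μκ ^ (κ * N))⁻¹ * μκ ^ t := by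
    intro η₁ hη0 hη
    have hL : μ ^ (k * N) * η₁ ^ l
        ≤ μκ ^ (∑ m ∈ Finset.Icc 1 k, (i m + 1) * N) * μκ ^ l :=
      mul_le_mul (part1 k le_rfl) (pow_le_pow_left₀ hη0 hη l)
        (pow_nonneg hη0 l) (pow_nonneg hμκ0.le _)
    have hR : μκ ^ (∑ m ∈ Finset.Icc 1 k, (i m + 1) * N) * μκ ^ l
        ≤ (μκ ^ (κ * N))⁻¹ * μκ ^ t := by
      rw [inv_mul_eq_div, le_div_iff₀ (pow_pos hμκ0 (κ * N)), ← pow_add, ← pow_add]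
      apply pow_le_pow_of_le_one hμκ0.le hμκ1
      rw [ht]
      have : j * N ≤ κ * N := Nat.mul_le_mul_right N hj
      omega
    exact hL.trans hR
  exact ⟨part1, part2 ηt hηt0 (hηtle.trans hμbμκ), part2⟩
end
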